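/- arXiv:1910.10894 — 2 statements merged into one kernel-verified Lean document; each statement's English description precedes it below -/
import Mathlib

section
/- Let f be a smooth nonnegative function on ℝⁿ × (0,1] with ∂ₜ f ≤ Δ f pointwise and f(·,t) → 0 in L²_loc(ℝⁿ) as t → 0⁺. Then for every compactly supported Lipschitz function φ : ℝⁿ → ℝ and every t ∈ (0,1], (1/2) ∫ φ(x)² f(x,t)² dx ≤ ∫₀ᵗ ∫ |∇φ(x)|² f(x,s)² dx ds. -/
open MeasureTheory Filter Set Metric

/-- The Euclidean Laplacian of `g : ℝⁿ → ℝ`. -/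
noncomputable def heatLap {n : ℕ} (g : EuclideanSpace ℝ (Fin n) → ℝ)
    (x : EuclideanSpace ℝ (Fin n)) : ℝ :=
  ∑ i : Fin n, fderiv ℝ (fun y => fderiv ℝ g y (EuclideanSpace.single i (1 : ℝ))) x
    (EuclideanSpace.single i (1 : ℝ))


section Aux

variable {n : ℕ}


lemma exists_abs_bound {B : Set (EuclideanSpace ℝ (Fin n))} (hB : IsCompact B)
    {g : EuclideanSpace ℝ (Fin n) → ℝ} (hg : Continuous g) :
    ∃ M : ℝ, 0 ≤ M ∧ ∀ x ∈ B, |g x| ≤ M := by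
  obtain ⟨C, hC⟩ := hB.exists_bound_of_continuousOn hg.continuousOn
  exact ⟨max C 0, le_max_right _ _, fun x hx => ((Real.norm_eq_abs _) ▸ hC x hx).trans (le_max_left _ _)⟩

lemma seq_tendsto : Tendsto (fun k : ℕ => ((k : ℝ) + 1)⁻¹) atTop (nhdsWithin 0 {(0:ℝ)}ᶜ) := by
  apply tendsto_nhdsWithin_of_tendsto_nhds_of_eventually_within
  · exact tendsto_one_div_add_atTop_nhds_zero_nat |>.congr (by intro n; rw [one_div])
  · filter_upwards with k
    simp only [mem_compl_iff, mem_singleton_iff]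
    positivity

lemma seq_tendsto' : Tendsto (fun k : ℕ => ((k : ℝ) + 1)⁻¹) atTop (nhds 0) :=
  seq_tendsto.mono_right nhdsWithin_le_nhds

lemma quot_tendsto {g : EuclideanSpace ℝ (Fin n) → ℝ} {x e : EuclideanSpace ℝ (Fin n)}
    (hg : DifferentiableAt ℝ g x) :
    Tendsto (fun k : ℕ => (g (x + ((k:ℝ) + 1)⁻¹ • e) - g x) / ((k:ℝ) + 1)⁻¹) atTop
      (nhds (fderiv ℝ g x e)) := by
  have hc : HasDerivAt (fun s : ℝ => x + s • e) e 0 := by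
    simpa using ((hasDerivAt_id (0:ℝ)).smul_const e).const_add x
  have hg' : HasFDerivAt g (fderiv ℝ g x) (x + (0:ℝ) • e) := by
    simpa using hg.hasFDerivAt
  have h1 : HasDerivAt (fun s : ℝ => g (x + s • e)) (fderiv ℝ g x e) 0 :=
    hg'.comp_hasDerivAt 0 hc
  rw [hasDerivAt_iff_tendsto_slope] at h1
  have h2 := h1.comp seq_tendsto
  convert h2 using 1
  funext k
  simp [slope, Function.comp]
  ring

/-- difference quotient in direction `-e` -/
lemma quot_tendsto_neg {g : EuclideanSpace ℝ (Fin n) → ℝ} {x e : EuclideanSpace ℝ (Fin n)}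
    (hg : DifferentiableAt ℝ g x) :
    Tendsto (fun k : ℕ => (g (x - ((k:ℝ) + 1)⁻¹ • e) - g x) / ((k:ℝ) + 1)⁻¹) atTop
      (nhds (-(fderiv ℝ g x e))) := by
  have := quot_tendsto (e := -e) hg
  simp only [smul_neg, ← sub_eq_add_neg, map_neg] at this
  exact this

set_option maxHeartbeats 1000000 in
theorem ibp_core (φ : EuclideanSpace ℝ (Fin n) → ℝ) (K : NNReal) (hφ : LipschitzWith K φ)
    (hφc : HasCompactSupport φ)
    (u : EuclideanSpace ℝ (Fin n) → ℝ) (hu : ContDiff ℝ (⊤:ℕ∞) u)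
    (e : EuclideanSpace ℝ (Fin n)) (he : ‖e‖ = 1) :
    ∫ x, φ x ^ 2 * u x * fderiv ℝ (fun y => fderiv ℝ u y e) x e ≤
      ∫ x, (fderiv ℝ φ x e) ^ 2 * u x ^ 2 := by
  set v : EuclideanSpace ℝ (Fin n) → ℝ := fun y => fderiv ℝ u y e with hv_def
  set w : EuclideanSpace ℝ (Fin n) → ℝ := fun y => fderiv ℝ v y e with hw_def
  set p : EuclideanSpace ℝ (Fin n) → ℝ := fun y => fderiv ℝ φ y e with hp_def
  have hφcont : Continuous φ := hφ.continuous
  have hucont : Continuous u := hu.continuous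
  have hudiff : Differentiable ℝ u := hu.differentiable (by simp)
  have hv_smooth : ContDiff ℝ (⊤:ℕ∞) v :=
    (hu.fderiv_right (by simp)).clm_apply contDiff_const
  have hvcont : Continuous v := hv_smooth.continuous
  have hvdiff : Differentiable ℝ v := hv_smooth.differentiable (by simp)
  have hwcont : Continuous w :=
    ((hv_smooth.fderiv_right (m := (⊤:ℕ∞)) (by simp)).clm_apply contDiff_const).continuous
  have hfucont : Continuous (fun x => ‖fderiv ℝ u x‖) :=
    (hu.fderiv_right (m := (⊤:ℕ∞)) (by simp)).continuous.norm
  have hfvcont : Continuous (fun x => ‖fderiv ℝ v x‖) :=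
    (hv_smooth.fderiv_right (m := (⊤:ℕ∞)) (by simp)).continuous.norm
  -- support radius
  obtain ⟨R, hRpos, hR⟩ : ∃ R : ℝ, 0 < R ∧ tsupport φ ⊆ closedBall 0 R := by
    obtain ⟨R₀, hR₀⟩ := hφc.isBounded.subset_closedBall 0
    exact ⟨max R₀ 1, lt_of_lt_of_le one_pos (le_max_right _ _),
      hR₀.trans (closedBall_subset_closedBall (le_max_left _ _))⟩
  set B : Set (EuclideanSpace ℝ (Fin n)) := closedBall 0 (R + 2) with hB_def
  have hBc : IsCompact B := isCompact_closedBall _ _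
  -- bounds
  obtain ⟨Mu, hMu0, hMu⟩ := exists_abs_bound hBc hucont
  obtain ⟨Mv, hMv0, hMv⟩ := exists_abs_bound hBc hvcont
  obtain ⟨Mφ, hMφ0, hMφB⟩ := exists_abs_bound hBc hφcont
  obtain ⟨Lu, hLu0, hLu⟩ := exists_abs_bound hBc hfucont
  obtain ⟨Lv, hLv0, hLv⟩ := exists_abs_bound hBc hfvcont
  have hsub1 : closedBall (0:EuclideanSpace ℝ (Fin n)) R ⊆ closedBall 0 (R+1) :=
    closedBall_subset_closedBall (by linarith)
  have hsub2 : closedBall (0:EuclideanSpace ℝ (Fin n)) (R+1) ⊆ B :=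
    closedBall_subset_closedBall (by linarith)
  have hφ_zero : ∀ x, x ∉ closedBall (0:EuclideanSpace ℝ (Fin n)) (R+1) → φ x = 0 := by
    intro x hx
    apply image_eq_zero_of_notMem_tsupport
    intro hmem
    exact hx (hsub1 (hR hmem))
  have hMφ : ∀ x, |φ x| ≤ Mφ := by
    intro x
    by_cases hx : x ∈ closedBall (0:EuclideanSpace ℝ (Fin n)) (R+1)
    · exact hMφB x (hsub2 hx)
    · rw [hφ_zero x hx]; simpa using hMφ0
  have hp_bound : ∀ x, |p x| ≤ K := by
    intro x
    by_cases hx : DifferentiableAt ℝ φ x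
    · have h1 : ‖fderiv ℝ φ x‖ ≤ K := hx.hasFDerivAt.le_of_lipschitz hφ
      calc |p x| = ‖fderiv ℝ φ x e‖ := (Real.norm_eq_abs _).symm
      _ ≤ ‖fderiv ℝ φ x‖ * ‖e‖ := (fderiv ℝ φ x).le_opNorm e
      _ ≤ K * 1 := by rw [he]; exact mul_le_mul_of_nonneg_right h1 zero_le_one
      _ = K := mul_one _
    · simp only [hp_def, fderiv_zero_of_not_differentiableAt hx]; simp
  have hp_supp : ∀ x, x ∉ tsupport φ → p x = 0 := by
    intro x hx
    have h0 : φ =ᶠ[nhds x] 0 := notMem_tsupport_iff_eventuallyEq.mp hx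
    simp only [hp_def, h0.fderiv_eq]
    rw [show (0 : EuclideanSpace ℝ (Fin n) → ℝ) = fun _ => (0:ℝ) from rfl, fderiv_fun_const]
    simp
  have hp_meas : Measurable p := measurable_fderiv_apply_const ℝ φ e
  -- MVT bounds
  have hu_lip : ∀ x ∈ B, ∀ y ∈ B, |u y - u x| ≤ Lu * ‖y - x‖ := by
    intro x hx y hy
    rw [← Real.norm_eq_abs]
    exact Convex.norm_image_sub_le_of_norm_fderiv_le (fun z _ => hudiff z)
      (fun z hz => (le_abs_self _).trans (hLu z hz)) (convex_closedBall _ _) hx hy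
  have hv_lip : ∀ x ∈ B, ∀ y ∈ B, |v y - v x| ≤ Lv * ‖y - x‖ := by
    intro x hx y hy
    rw [← Real.norm_eq_abs]
    exact Convex.norm_image_sub_le_of_norm_fderiv_le (fun z _ => hvdiff z)
      (fun z hz => (le_abs_self _).trans (hLv z hz)) (convex_closedBall _ _) hx hy

  -- the sequence of step sizes
  set hs : ℕ → ℝ := fun k => ((k:ℝ) + 1)⁻¹ with hhs_def
  have hs_pos : ∀ k, 0 < hs k := fun k => by positivity
  have hs_le1 : ∀ k, hs k ≤ 1 := by
    intro k
    rw [hhs_def]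
    have h1 : (1:ℝ) ≤ (k:ℝ) + 1 := by
      have := Nat.cast_nonneg (α := ℝ) k
      linarith
    simpa using inv_le_one_of_one_le₀ h1
  have hs_ne : ∀ k, hs k ≠ 0 := fun k => ne_of_gt (hs_pos k)
  have hnorm_smul : ∀ k, ‖hs k • e‖ = hs k := by
    intro k; rw [norm_smul, he, Real.norm_eq_abs, abs_of_pos (hs_pos k), mul_one]
  have hmem_add : ∀ k, ∀ x ∈ closedBall (0:EuclideanSpace ℝ (Fin n)) (R+1), x + hs k • e ∈ B := by
    intro k x hx
    rw [mem_closedBall_zero_iff] at hx ⊢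
    calc ‖x + hs k • e‖ ≤ ‖x‖ + ‖hs k • e‖ := norm_add_le _ _
    _ ≤ (R+1) + 1 := add_le_add hx ((hnorm_smul k).le.trans (hs_le1 k))
    _ ≤ R + 2 := by linarith
  have hmem_sub : ∀ k, ∀ x ∈ closedBall (0:EuclideanSpace ℝ (Fin n)) (R+1), x - hs k • e ∈ B := by
    intro k x hx
    rw [mem_closedBall_zero_iff] at hx ⊢
    calc ‖x - hs k • e‖ ≤ ‖x‖ + ‖hs k • e‖ := norm_sub_le _ _
    _ ≤ (R+1) + 1 := add_le_add hx ((hnorm_smul k).le.trans (hs_le1 k))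
    _ ≤ R + 2 := by linarith
  have hφ_zero_sub : ∀ k, ∀ x, x ∉ closedBall (0:EuclideanSpace ℝ (Fin n)) (R+1) →
      φ (x - hs k • e) = 0 := by
    intro k x hx
    apply image_eq_zero_of_notMem_tsupport
    intro hmem
    apply hx
    rw [mem_closedBall_zero_iff]
    have h1 : ‖x - hs k • e‖ ≤ R := mem_closedBall_zero_iff.mp (hR hmem)
    calc ‖x‖ = ‖(x - hs k • e) + hs k • e‖ := by rw [sub_add_cancel]
    _ ≤ ‖x - hs k • e‖ + ‖hs k • e‖ := norm_add_le _ _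
    _ ≤ R + 1 := add_le_add h1 ((hnorm_smul k).le.trans (hs_le1 k))
  -- integrability of continuous functions vanishing outside the ball
  have hCS : ∀ (g : EuclideanSpace ℝ (Fin n) → ℝ), Continuous g →
      (∀ x, x ∉ closedBall (0:EuclideanSpace ℝ (Fin n)) (R+1) → g x = 0) → Integrable g volume :=
    fun g hg hsupp => hg.integrable_of_hasCompactSupport
      (HasCompactSupport.intro (isCompact_closedBall _ _) hsupp)
  have hbound_int : ∀ c : ℝ, Integrable
      ((closedBall (0:EuclideanSpace ℝ (Fin n)) (R+1)).indicator (fun _ => c)) volume :=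
    fun c => (integrableOn_const measure_closedBall_lt_top.ne).integrable_indicator
      measurableSet_closedBall
  -- the three integrand families
  set G : ℕ → EuclideanSpace ℝ (Fin n) → ℝ :=
    fun k x => φ x ^ 2 * u x * ((v (x + hs k • e) - v x) / hs k) with hG_def
  set H : ℕ → EuclideanSpace ℝ (Fin n) → ℝ :=
    fun k x => ((φ (x - hs k • e)) ^ 2 * u (x - hs k • e) - φ x ^ 2 * u x) / hs k * v x
    with hH_def
  set L2 : EuclideanSpace ℝ (Fin n) → ℝ :=
    fun x => -(φ x ^ 2 * v x ^ 2) - 2 * φ x * p x * u x * v x with hL2_def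
  -- Step 1 : ∫ G k → ∫ φ² u w
  have hstep1 : Tendsto (fun k => ∫ x, G k x) atTop (nhds (∫ x, φ x ^ 2 * u x * w x)) := by
    apply tendsto_integral_of_dominated_convergence
      ((closedBall (0:EuclideanSpace ℝ (Fin n)) (R+1)).indicator (fun _ => Mφ^2 * Mu * Lv))
    · intro k
      exact (((hφcont.pow 2).mul hucont).mul
        (((hvcont.comp (continuous_id.add continuous_const)).sub hvcont).div_const _)).aestronglyMeasurable
    · exact hbound_int _
    · intro k
      filter_upwards with x
      by_cases hx : x ∈ closedBall (0:EuclideanSpace ℝ (Fin n)) (R+1)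
      · rw [indicator_of_mem hx]
        have h2 : |u x| ≤ Mu := hMu x (hsub2 hx)
        have h3 : |v (x + hs k • e) - v x| ≤ Lv * hs k := by
          have h := hv_lip x (hsub2 hx) (x + hs k • e) (hmem_add k x hx)
          simpa [hnorm_smul k] using h
        have h4 : |(v (x + hs k • e) - v x) / hs k| ≤ Lv := by
          rw [abs_div, abs_of_pos (hs_pos k), div_le_iff₀ (hs_pos k)]
          linarith
        calc ‖G k x‖ = |φ x| ^ 2 * |u x| * |(v (x + hs k • e) - v x) / hs k| := by
              rw [hG_def, Real.norm_eq_abs, abs_mul, abs_mul, abs_pow]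
        _ ≤ Mφ^2 * Mu * Lv := by
              have hφx := hMφ x
              gcongr
      · rw [indicator_of_notMem hx]
        have h0 := hφ_zero x hx
        simp [hG_def, h0]
    · filter_upwards with x
      have hq := quot_tendsto (e := e) (hvdiff x)
      exact hq.const_mul _
  -- Step 2 : ∫ G k = ∫ H k by translation invariance
  have hstep2 : ∀ k, ∫ x, G k x = ∫ x, H k x := by
    intro k
    have hφtc : Continuous (fun x : EuclideanSpace ℝ (Fin n) => φ (x - hs k • e)) :=
      hφcont.comp (continuous_id.sub continuous_const)
    have hutc : Continuous (fun x : EuclideanSpace ℝ (Fin n) => u (x - hs k • e)) :=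
      hucont.comp (continuous_id.sub continuous_const)
    have i1 : Integrable (fun x => φ x ^ 2 * u x * v (x + hs k • e)) volume :=
      hCS _ (((hφcont.pow 2).mul hucont).mul (hvcont.comp (continuous_id.add continuous_const)))
        (fun x hx => by simp [hφ_zero x hx])
    have i2 : Integrable (fun x => φ x ^ 2 * u x * v x) volume :=
      hCS _ (((hφcont.pow 2).mul hucont).mul hvcont) (fun x hx => by simp [hφ_zero x hx])
    have i3 : Integrable (fun x => φ (x - hs k • e) ^ 2 * u (x - hs k • e) * v x) volume :=
      hCS _ (((hφtc.pow 2).mul hutc).mul hvcont) (fun x hx => by simp [hφ_zero_sub k x hx])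
    have htrans : ∫ x, φ (x - hs k • e) ^ 2 * u (x - hs k • e) * v x
        = ∫ x, φ x ^ 2 * u x * v (x + hs k • e) := by
      have h := integral_add_right_eq_self (μ := volume)
        (fun x => φ (x - hs k • e) ^ 2 * u (x - hs k • e) * v x) (hs k • e)
      simp only [add_sub_cancel_right] at h
      exact h.symm
    calc ∫ x, G k x
        = ∫ x, (φ x ^ 2 * u x * v (x + hs k • e) - φ x ^ 2 * u x * v x) / hs k := by
          congr 1; funext x; rw [hG_def]; ring
    _ = (∫ x, (φ x ^ 2 * u x * v (x + hs k • e) - φ x ^ 2 * u x * v x)) / hs k :=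
          integral_div _ _
    _ = ((∫ x, φ x ^ 2 * u x * v (x + hs k • e)) - ∫ x, φ x ^ 2 * u x * v x) / hs k := by
          rw [integral_sub i1 i2]
    _ = ((∫ x, φ (x - hs k • e) ^ 2 * u (x - hs k • e) * v x) - ∫ x, φ x ^ 2 * u x * v x) / hs k := by
          rw [htrans]
    _ = (∫ x, (φ (x - hs k • e) ^ 2 * u (x - hs k • e) * v x - φ x ^ 2 * u x * v x)) / hs k := by
          rw [integral_sub i3 i2]
    _ = ∫ x, (φ (x - hs k • e) ^ 2 * u (x - hs k • e) * v x - φ x ^ 2 * u x * v x) / hs k :=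
          (integral_div _ _).symm
    _ = ∫ x, H k x := by
          congr 1; funext x; rw [hH_def]; ring
  -- Step 3 : ∫ H k → ∫ L2
  have hstep3 : Tendsto (fun k => ∫ x, H k x) atTop (nhds (∫ x, L2 x)) := by
    apply tendsto_integral_of_dominated_convergence
      ((closedBall (0:EuclideanSpace ℝ (Fin n)) (R+1)).indicator
        (fun _ => (Mφ^2 * Lu + 2 * Mφ * K * Mu) * Mv))
    · intro k
      have hφtc : Continuous (fun x : EuclideanSpace ℝ (Fin n) => φ (x - hs k • e)) :=
        hφcont.comp (continuous_id.sub continuous_const)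
      have hutc : Continuous (fun x : EuclideanSpace ℝ (Fin n) => u (x - hs k • e)) :=
        hucont.comp (continuous_id.sub continuous_const)
      exact ((((hφtc.pow 2).mul hutc).sub ((hφcont.pow 2).mul hucont)).div_const _ |>.mul
        hvcont).aestronglyMeasurable
    · exact hbound_int _
    · intro k
      filter_upwards with x
      by_cases hx : x ∈ closedBall (0:EuclideanSpace ℝ (Fin n)) (R+1)
      · rw [indicator_of_mem hx]
        have hxB := hsub2 hx
        have hxB' := hmem_sub k x hx
        have hrw : H k x = (φ (x - hs k • e) ^ 2 * ((u (x - hs k • e) - u x) / hs k)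
            + (φ (x - hs k • e) + φ x) * ((φ (x - hs k • e) - φ x) / hs k) * u x) * v x := by
          rw [hH_def]
          ring
        have hq1 : |(u (x - hs k • e) - u x) / hs k| ≤ Lu := by
          have h := hu_lip x hxB (x - hs k • e) hxB'
          rw [abs_div, abs_of_pos (hs_pos k), div_le_iff₀ (hs_pos k)]
          have h2 : ‖x - hs k • e - x‖ = hs k := by
            rw [show x - hs k • e - x = -(hs k • e) by abel, norm_neg, hnorm_smul]
          rw [h2] at h
          linarith
        have hq2 : |(φ (x - hs k • e) - φ x) / hs k| ≤ (K:ℝ) := by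
          have h := hφ.dist_le_mul (x - hs k • e) x
          rw [Real.dist_eq] at h
          have h2 : dist (x - hs k • e) x = hs k := by
            rw [dist_eq_norm, show x - hs k • e - x = -(hs k • e) by abel,
              norm_neg, hnorm_smul]
          rw [h2] at h
          rw [abs_div, abs_of_pos (hs_pos k), div_le_iff₀ (hs_pos k)]
          linarith
        have e1 : |φ (x - hs k • e) ^ 2 * ((u (x - hs k • e) - u x) / hs k)| ≤ Mφ^2 * Lu := by
          rw [abs_mul, abs_pow]
          have := hMφ (x - hs k • e)
          gcongr
        have e2 : |(φ (x - hs k • e) + φ x) * ((φ (x - hs k • e) - φ x) / hs k) * u x|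
            ≤ 2 * Mφ * K * Mu := by
          rw [abs_mul, abs_mul]
          have hsum : |φ (x - hs k • e) + φ x| ≤ 2 * Mφ :=
            (abs_add_le _ _).trans (by linarith [hMφ (x - hs k • e), hMφ x])
          have hux : |u x| ≤ Mu := hMu x hxB
          calc |φ (x - hs k • e) + φ x| * |(φ (x - hs k • e) - φ x) / hs k| * |u x|
              ≤ (2 * Mφ) * (K:ℝ) * Mu := by gcongr
          _ = 2 * Mφ * K * Mu := by ring
        calc ‖H k x‖ = |φ (x - hs k • e) ^ 2 * ((u (x - hs k • e) - u x) / hs k)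
              + (φ (x - hs k • e) + φ x) * ((φ (x - hs k • e) - φ x) / hs k) * u x| * |v x| := by
              rw [hrw, Real.norm_eq_abs, abs_mul]
        _ ≤ (Mφ^2 * Lu + 2 * Mφ * K * Mu) * Mv := by
              have hvx : |v x| ≤ Mv := hMv x hxB
              have habs := (abs_add_le (φ (x - hs k • e) ^ 2 * ((u (x - hs k • e) - u x) / hs k))
                ((φ (x - hs k • e) + φ x) * ((φ (x - hs k • e) - φ x) / hs k) * u x))
              have h5 : |φ (x - hs k • e) ^ 2 * ((u (x - hs k • e) - u x) / hs k)
                + (φ (x - hs k • e) + φ x) * ((φ (x - hs k • e) - φ x) / hs k) * u x|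
                ≤ Mφ^2 * Lu + 2 * Mφ * K * Mu := habs.trans (by linarith)
              gcongr
      · rw [indicator_of_notMem hx]
        have h0 := hφ_zero x hx
        have h1 := hφ_zero_sub k x hx
        simp [hH_def, h0, h1]
    · filter_upwards [hφ.ae_differentiableAt] with x hx
      have hpt : Tendsto (fun k => x - hs k • e) atTop (nhds x) := by
        have h := tendsto_const_nhds (x := x) (f := atTop (α := ℕ)) |>.sub
          ((seq_tendsto').smul_const e)
        simpa using h
      have tφ : Tendsto (fun k => φ (x - hs k • e)) atTop (nhds (φ x)) :=
        (hφcont.continuousAt.tendsto).comp hpt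
      have tu : Tendsto (fun k => (u (x - hs k • e) - u x) / hs k) atTop (nhds (-(v x))) :=
        quot_tendsto_neg (hudiff x)
      have tφq : Tendsto (fun k => (φ (x - hs k • e) - φ x) / hs k) atTop (nhds (-(p x))) :=
        quot_tendsto_neg hx
      have Texpr : Tendsto (fun k => (φ (x - hs k • e) ^ 2 * ((u (x - hs k • e) - u x) / hs k)
          + (φ (x - hs k • e) + φ x) * ((φ (x - hs k • e) - φ x) / hs k) * u x) * v x) atTop
          (nhds ((φ x ^ 2 * (-(v x)) + (φ x + φ x) * (-(p x)) * u x) * v x)) :=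
        ((((tφ.pow 2).mul tu).add (((tφ.add tendsto_const_nhds).mul tφq).mul
          tendsto_const_nhds)).mul tendsto_const_nhds)
      have hval : (φ x ^ 2 * (-(v x)) + (φ x + φ x) * (-(p x)) * u x) * v x = L2 x := by
        rw [hL2_def]; ring
      rw [hval] at Texpr
      apply Texpr.congr
      intro k
      rw [hH_def]
      ring
  -- Step 4 : combine
  have key : ∫ x, φ x ^ 2 * u x * w x = ∫ x, L2 x :=
    tendsto_nhds_unique (hstep1.congr hstep2) hstep3
  -- integrability of L2 and p² u²
  have hL2_meas : AEStronglyMeasurable L2 volume := by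
    have : Measurable L2 := by
      rw [hL2_def]
      exact (((hφcont.measurable.pow_const 2).mul (hvcont.measurable.pow_const 2)).neg).sub
        ((((measurable_const.mul hφcont.measurable).mul hp_meas).mul hucont.measurable).mul
          hvcont.measurable)
    exact this.aestronglyMeasurable
  have hp_zero : ∀ x, x ∉ closedBall (0:EuclideanSpace ℝ (Fin n)) (R+1) → p x = 0 := by
    intro x hx
    exact hp_supp x (fun hmem => hx (hsub1 (hR hmem)))
  have iL2 : Integrable L2 volume := by
    apply Integrable.mono' (hbound_int (Mφ^2 * Mv^2 + 2 * Mφ * K * Mu * Mv)) hL2_meas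
    filter_upwards with x
    by_cases hx : x ∈ closedBall (0:EuclideanSpace ℝ (Fin n)) (R+1)
    · rw [indicator_of_mem hx]
      have hxB := hsub2 hx
      have b1 : |φ x ^ 2 * v x ^ 2| ≤ Mφ^2 * Mv^2 := by
        rw [abs_mul, abs_pow, abs_pow]
        have h1 := hMφ x
        have h2 := hMv x hxB
        gcongr
      have b2 : |2 * φ x * p x * u x * v x| ≤ 2 * Mφ * K * Mu * Mv := by
        rw [abs_mul, abs_mul, abs_mul, abs_mul, abs_two]
        have h1 := hMφ x
        have h2 := hp_bound x
        have h3 := hMu x hxB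
        have h4 := hMv x hxB
        gcongr
      have hLrw : L2 x = (-(φ x ^ 2 * v x ^ 2)) + (-(2 * φ x * p x * u x * v x)) := by
        rw [hL2_def]; ring
      rw [Real.norm_eq_abs, hLrw]
      calc |(-(φ x ^ 2 * v x ^ 2)) + (-(2 * φ x * p x * u x * v x))|
          ≤ |(-(φ x ^ 2 * v x ^ 2))| + |(-(2 * φ x * p x * u x * v x))| := abs_add_le _ _
      _ = |φ x ^ 2 * v x ^ 2| + |2 * φ x * p x * u x * v x| := by rw [abs_neg, abs_neg]
      _ ≤ Mφ^2 * Mv^2 + 2 * Mφ * K * Mu * Mv := add_le_add b1 b2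
    · rw [indicator_of_notMem hx]
      have h0 := hφ_zero x hx
      simp [hL2_def, h0]
  have iP2 : Integrable (fun x => p x ^ 2 * u x ^ 2) volume := by
    apply Integrable.mono' (hbound_int ((K:ℝ)^2 * Mu^2))
      (((hp_meas.pow_const 2).mul (hucont.measurable.pow_const 2)).aestronglyMeasurable)
    filter_upwards with x
    by_cases hx : x ∈ closedBall (0:EuclideanSpace ℝ (Fin n)) (R+1)
    · simp only [indicator_of_mem hx, Real.norm_eq_abs, Pi.mul_apply]
      rw [abs_mul, abs_pow, abs_pow]
      have h1 := hp_bound x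
      have h2 := hMu x (hsub2 hx)
      gcongr
    · rw [indicator_of_notMem hx]
      have h0 := hp_zero x hx
      simp [h0]
  -- Step 5 : conclude
  show ∫ x, φ x ^ 2 * u x * w x ≤ ∫ x, p x ^ 2 * u x ^ 2
  rw [key]
  apply integral_mono iL2 iP2
  intro x
  have hsq := sq_nonneg (φ x * v x + p x * u x)
  simp only [hL2_def]
  nlinarith [hsq]

theorem grad_norm_sq (φ : EuclideanSpace ℝ (Fin n) → ℝ) (x : EuclideanSpace ℝ (Fin n)) :
    ‖gradient φ x‖ ^ 2 = ∑ i : Fin n, (fderiv ℝ φ x (EuclideanSpace.single i (1:ℝ))) ^ 2 := by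
  have h : ∀ v : EuclideanSpace ℝ (Fin n), fderiv ℝ φ x v = inner ℝ (gradient φ x) v := by
    intro v
    simp only [gradient]
    rw [← InnerProductSpace.toDual_apply_apply]
    simp
  have h2 : ∀ i, fderiv ℝ φ x (EuclideanSpace.single i (1:ℝ)) = gradient φ x i := by
    intro i
    rw [h, real_inner_comm, EuclideanSpace.inner_single_left]
    simp
  simp_rw [h2]
  rw [EuclideanSpace.norm_eq, Real.sq_sqrt (by positivity)]
  congr 1; ext i
  rw [Real.norm_eq_abs, sq_abs]


lemma slice_smooth (f : ℝ → EuclideanSpace ℝ (Fin n) → ℝ)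
    (hf_smooth : ContDiffOn ℝ (⊤ : ℕ∞)
      (fun p : ℝ × EuclideanSpace ℝ (Fin n) => f p.1 p.2) (Set.Ioc (0:ℝ) 1 ×ˢ Set.univ))
    {s : ℝ} (hs : s ∈ Set.Ioc (0:ℝ) 1) : ContDiff ℝ (⊤:ℕ∞) (fun x => f s x) := by
  rw [← contDiffOn_univ]
  exact hf_smooth.comp (((contDiff_const (c := s)).prodMk contDiff_id).contDiffOn)
    (fun x _ => ⟨hs, mem_univ _⟩)

lemma slice_hasDerivAt (f : ℝ → EuclideanSpace ℝ (Fin n) → ℝ)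
    (hf_smooth : ContDiffOn ℝ (⊤ : ℕ∞)
      (fun p : ℝ × EuclideanSpace ℝ (Fin n) => f p.1 p.2) (Set.Ioc (0:ℝ) 1 ×ˢ Set.univ))
    {s : ℝ} (hs : s ∈ Set.Ioo (0:ℝ) 1) (x : EuclideanSpace ℝ (Fin n)) :
    HasDerivAt (fun τ => f τ x)
      (fderiv ℝ (fun p : ℝ × EuclideanSpace ℝ (Fin n) => f p.1 p.2) (s, x) (1, 0)) s := by
  have hopen : IsOpen (Set.Ioo (0:ℝ) 1 ×ˢ (Set.univ : Set (EuclideanSpace ℝ (Fin n)))) :=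
    isOpen_Ioo.prod isOpen_univ
  have hmem : (s, x) ∈ Set.Ioo (0:ℝ) 1 ×ˢ (Set.univ : Set (EuclideanSpace ℝ (Fin n))) :=
    ⟨hs, mem_univ _⟩
  have hCA : ContDiffAt ℝ (⊤:ℕ∞) (fun p : ℝ × EuclideanSpace ℝ (Fin n) => f p.1 p.2) (s, x) := by
    apply (hf_smooth.mono (prod_mono (Ioo_subset_Ioc_self) (subset_refl _))).contDiffAt
    exact mem_nhds_iff.mpr ⟨_, subset_refl _, hopen, hmem⟩
  have hdF : DifferentiableAt ℝ (fun p : ℝ × EuclideanSpace ℝ (Fin n) => f p.1 p.2) (s, x) :=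
    hCA.differentiableAt (by simp)
  have hcurve : HasDerivAt (fun τ : ℝ => (τ, x)) ((1:ℝ), (0:EuclideanSpace ℝ (Fin n))) s := by
    exact (hasDerivAt_id s).prodMk (hasDerivAt_const s x)
  exact hdF.hasFDerivAt.comp_hasDerivAt s hcurve

lemma fderiv_slice_contOn (f : ℝ → EuclideanSpace ℝ (Fin n) → ℝ)
    (hf_smooth : ContDiffOn ℝ (⊤ : ℕ∞)
      (fun p : ℝ × EuclideanSpace ℝ (Fin n) => f p.1 p.2) (Set.Ioc (0:ℝ) 1 ×ˢ Set.univ)) :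
    ContinuousOn (fun p : ℝ × EuclideanSpace ℝ (Fin n) =>
      fderiv ℝ (fun q : ℝ × EuclideanSpace ℝ (Fin n) => f q.1 q.2) p (1, 0))
      (Set.Ioo (0:ℝ) 1 ×ˢ Set.univ) := by
  have hopen : IsOpen (Set.Ioo (0:ℝ) 1 ×ˢ (Set.univ : Set (EuclideanSpace ℝ (Fin n)))) :=
    isOpen_Ioo.prod isOpen_univ
  have h1 : ContinuousOn (fderiv ℝ (fun q : ℝ × EuclideanSpace ℝ (Fin n) => f q.1 q.2))
      (Set.Ioo (0:ℝ) 1 ×ˢ Set.univ) := by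
    apply ContDiffOn.continuousOn_fderiv_of_isOpen
      (hf_smooth.mono (prod_mono Ioo_subset_Ioc_self (subset_refl _))) hopen
    simp
  exact h1.clm_apply continuousOn_const

lemma heatLap_continuous (u : EuclideanSpace ℝ (Fin n) → ℝ) (hu : ContDiff ℝ (⊤:ℕ∞) u) :
    Continuous (heatLap u) := by
  show Continuous fun x => ∑ i : Fin n,
    fderiv ℝ (fun y => fderiv ℝ u y (EuclideanSpace.single i (1 : ℝ))) x
      (EuclideanSpace.single i (1 : ℝ))
  apply continuous_finset_sum
  intro i _
  have hv : ContDiff ℝ (⊤:ℕ∞) (fun y => fderiv ℝ u y (EuclideanSpace.single i (1:ℝ))) :=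
    (hu.fderiv_right (m := (⊤:ℕ∞)) (by simp)).clm_apply contDiff_const
  exact ((hv.fderiv_right (m := (⊤:ℕ∞)) (by simp)).clm_apply contDiff_const).continuous



section Param
variable (f : ℝ → EuclideanSpace ℝ (Fin n) → ℝ)
    (hf_smooth : ContDiffOn ℝ (⊤ : ℕ∞)
      (fun p : ℝ × EuclideanSpace ℝ (Fin n) => f p.1 p.2) (Set.Ioc (0:ℝ) 1 ×ˢ Set.univ))
    {ψ : EuclideanSpace ℝ (Fin n) → ℝ} (hψm : Measurable ψ) {Mψ R : ℝ} (hR : 0 < R)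
    (hMψ : ∀ x, |ψ x| ≤ Mψ) (hψ0 : ∀ x, x ∉ closedBall (0:EuclideanSpace ℝ (Fin n)) R → ψ x = 0)

include hf_smooth hψm hR hMψ hψ0

lemma param_slice_cont {s : ℝ} (hs : s ∈ Set.Ioc (0:ℝ) 1) : Continuous (fun x => f s x) := by
  have h : ContDiff ℝ (⊤:ℕ∞) (fun x => f s x) := by
    rw [← contDiffOn_univ]
    exact hf_smooth.comp (((contDiff_const (c := s)).prodMk contDiff_id).contDiffOn)
      (fun x _ => ⟨hs, mem_univ _⟩)
  exact h.continuous

lemma param_integrable {s : ℝ} (hs : s ∈ Set.Ioc (0:ℝ) 1) :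
    Integrable (fun x => ψ x * f s x ^ 2) volume := by
  have hc := param_slice_cont f hf_smooth hψm hR hMψ hψ0 hs
  obtain ⟨Ms, hMs⟩ := (isCompact_closedBall (0:EuclideanSpace ℝ (Fin n)) R)
    |>.exists_bound_of_continuousOn (hc.norm.continuousOn)
  apply Integrable.mono'
    ((integrableOn_const measure_closedBall_lt_top.ne).integrable_indicator
      (measurableSet_closedBall (x := (0:EuclideanSpace ℝ (Fin n))) (ε := R))
      (f := fun _ => Mψ * Ms ^ 2))
    ((hψm.mul ((hc.measurable).pow_const 2)).aestronglyMeasurable)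
  filter_upwards with x
  by_cases hx : x ∈ closedBall (0:EuclideanSpace ℝ (Fin n)) R
  · simp only [indicator_of_mem hx, Real.norm_eq_abs, Pi.mul_apply]
    rw [abs_mul]
    have h1 := hMψ x
    have h2 := hMs x hx
    have h3 : |f s x ^ 2| = ‖f s x‖ ^ 2 := by
      rw [Real.norm_eq_abs, abs_pow, sq_abs, ← sq_abs]
    rw [h3]
    have h4 : (0:ℝ) ≤ ‖f s x‖ := norm_nonneg _
    have h5 : ‖‖f s x‖‖ = ‖f s x‖ := norm_norm _
    rw [h5] at h2
    gcongr
    exact (abs_nonneg _).trans h1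
  · rw [indicator_of_notMem hx]
    simp [hψ0 x hx]

lemma param_continuousOn :
    ContinuousOn (fun s => ∫ x, ψ x * f s x ^ 2) (Set.Ioc (0:ℝ) 1) := by
  intro s₀ hs₀
  have hhalf : 0 < s₀ / 2 := by linarith [hs₀.1]
  have hKc : IsCompact ((Set.Icc (s₀/2) 1) ×ˢ closedBall (0:EuclideanSpace ℝ (Fin n)) R) :=
    isCompact_Icc.prod (isCompact_closedBall _ _)
  have hsub : (Set.Icc (s₀/2) 1) ×ˢ closedBall (0:EuclideanSpace ℝ (Fin n)) R ⊆
      Set.Ioc (0:ℝ) 1 ×ˢ Set.univ :=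
    prod_mono (fun a ha => ⟨lt_of_lt_of_le hhalf ha.1, ha.2⟩) (subset_univ _)
  obtain ⟨MF, hMF⟩ := hKc.exists_bound_of_continuousOn (hf_smooth.continuousOn.mono hsub)
  have hMF0 : 0 ≤ Mψ := (abs_nonneg _).trans (hMψ 0)
  apply continuousWithinAt_of_dominated
    (bound := (closedBall (0:EuclideanSpace ℝ (Fin n)) R).indicator (fun _ => Mψ * MF ^ 2))
  · filter_upwards [self_mem_nhdsWithin] with s hs
    exact (hψm.mul (((param_slice_cont f hf_smooth hψm hR hMψ hψ0 hs).measurable).pow_const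
      2)).aestronglyMeasurable
  · have hev : ∀ᶠ s in nhdsWithin s₀ (Set.Ioc (0:ℝ) 1), s ∈ Set.Icc (s₀/2) 1 := by
      have h1 : ∀ᶠ s in nhdsWithin s₀ (Set.Ioc (0:ℝ) 1), s₀/2 < s :=
        eventually_nhdsWithin_of_eventually_nhds (eventually_gt_nhds (by linarith [hs₀.1]))
      filter_upwards [h1, self_mem_nhdsWithin] with s h2 h3
      exact ⟨le_of_lt h2, h3.2⟩
    filter_upwards [hev] with s hs
    filter_upwards with x
    by_cases hx : x ∈ closedBall (0:EuclideanSpace ℝ (Fin n)) R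
    · rw [indicator_of_mem hx]
      have h1 := hMψ x
      have h2 := hMF (s, x) ⟨hs, hx⟩
      rw [Real.norm_eq_abs, abs_mul]
      have h3 : |f s x ^ 2| = ‖f s x‖ ^ 2 := by
        rw [Real.norm_eq_abs, abs_pow, sq_abs, ← sq_abs]
      rw [h3]
      gcongr
    · rw [indicator_of_notMem hx]
      simp [hψ0 x hx]
  · exact (integrableOn_const measure_closedBall_lt_top.ne).integrable_indicator
      measurableSet_closedBall
  · filter_upwards with x
    have hFs : ContinuousWithinAt (fun s => f s x) (Set.Ioc (0:ℝ) 1) s₀ := by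
      have hmap : Set.MapsTo (fun s : ℝ => (s, x)) (Set.Ioc (0:ℝ) 1)
          (Set.Ioc (0:ℝ) 1 ×ˢ Set.univ) := fun s hs => ⟨hs, mem_univ _⟩
      exact (hf_smooth.continuousOn.comp
        ((continuous_id.prodMk continuous_const).continuousOn) hmap) s₀ hs₀
    exact continuousWithinAt_const.mul (hFs.pow 2)

lemma param_le (hMψ0 : 0 ≤ Mψ) {s : ℝ} (hs : s ∈ Set.Ioc (0:ℝ) 1) :
    ∫ x, ψ x * f s x ^ 2 ≤
      Mψ * (∫⁻ x in ball (0:EuclideanSpace ℝ (Fin n)) (R+1),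
        ENNReal.ofReal (f s x ^ 2)).toReal := by
  have hc := param_slice_cont f hf_smooth hψm hR hMψ hψ0 hs
  have hsubB : closedBall (0:EuclideanSpace ℝ (Fin n)) R ⊆ ball 0 (R+1) :=
    closedBall_subset_ball (by linarith)
  have hint2 : IntegrableOn (fun x => f s x ^ 2) (ball (0:EuclideanSpace ℝ (Fin n)) (R+1))
      volume :=
    (((hc.pow 2).continuousOn.integrableOn_compact (isCompact_closedBall _ (R+1))).mono_set
      ball_subset_closedBall)
  have hint1 : IntegrableOn (fun x => ψ x * f s x ^ 2)
      (ball (0:EuclideanSpace ℝ (Fin n)) (R+1)) volume :=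
    (param_integrable f hf_smooth hψm hR hMψ hψ0 hs).integrableOn
  calc ∫ x, ψ x * f s x ^ 2
      = ∫ x in ball (0:EuclideanSpace ℝ (Fin n)) (R+1), ψ x * f s x ^ 2 := by
        rw [setIntegral_eq_integral_of_forall_compl_eq_zero]
        intro x hx
        have : x ∉ closedBall (0:EuclideanSpace ℝ (Fin n)) R := fun h => hx (hsubB h)
        simp [hψ0 x this]
  _ ≤ ∫ x in ball (0:EuclideanSpace ℝ (Fin n)) (R+1), Mψ * f s x ^ 2 := by
        apply setIntegral_mono_on hint1 (hint2.const_mul Mψ) measurableSet_ball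
        intro x _
        have h1 : ψ x ≤ Mψ := (le_abs_self _).trans (hMψ x)
        have h2 : (0:ℝ) ≤ f s x ^ 2 := sq_nonneg _
        exact mul_le_mul_of_nonneg_right h1 h2
  _ = Mψ * ∫ x in ball (0:EuclideanSpace ℝ (Fin n)) (R+1), f s x ^ 2 := by
        rw [integral_const_mul]
  _ = Mψ * (∫⁻ x in ball (0:EuclideanSpace ℝ (Fin n)) (R+1),
        ENNReal.ofReal (f s x ^ 2)).toReal := by
        congr 1
        rw [integral_eq_lintegral_of_nonneg_ae (Filter.Eventually.of_forall (fun x => sq_nonneg _))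
          ((hc.pow 2).aestronglyMeasurable.restrict)]
end Param

theorem ibp_full (φ : EuclideanSpace ℝ (Fin n) → ℝ) (K : NNReal) (hφ : LipschitzWith K φ)
    (hφc : HasCompactSupport φ)
    (u : EuclideanSpace ℝ (Fin n) → ℝ) (hu : ContDiff ℝ (⊤:ℕ∞) u) :
    ∫ x, φ x ^ 2 * u x * heatLap u x ≤ ∫ x, ‖gradient φ x‖ ^ 2 * u x ^ 2 := by
  have hφcont : Continuous φ := hφ.continuous
  have hucont : Continuous u := hu.continuous
  have hwcont : ∀ e : EuclideanSpace ℝ (Fin n),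
      Continuous (fun x => fderiv ℝ (fun y => fderiv ℝ u y e) x e) := by
    intro e
    have hv : ContDiff ℝ (⊤:ℕ∞) (fun y => fderiv ℝ u y e) :=
      (hu.fderiv_right (m := (⊤:ℕ∞)) (by simp)).clm_apply contDiff_const
    exact ((hv.fderiv_right (m := (⊤:ℕ∞)) (by simp)).clm_apply contDiff_const).continuous
  have hp_meas : ∀ e : EuclideanSpace ℝ (Fin n), Measurable (fun x => fderiv ℝ φ x e) :=
    fun e => measurable_fderiv_apply_const ℝ φ e
  -- compact support machinery
  obtain ⟨R, hRpos, hR⟩ : ∃ R : ℝ, 0 < R ∧ tsupport φ ⊆ closedBall 0 R := by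
    obtain ⟨R₀, hR₀⟩ := hφc.isBounded.subset_closedBall 0
    exact ⟨max R₀ 1, lt_of_lt_of_le one_pos (le_max_right _ _),
      hR₀.trans (closedBall_subset_closedBall (le_max_left _ _))⟩
  have hφ_zero : ∀ x, x ∉ closedBall (0:EuclideanSpace ℝ (Fin n)) R → φ x = 0 :=
    fun x hx => image_eq_zero_of_notMem_tsupport (fun hmem => hx (hR hmem))
  have hp_zero : ∀ e, ∀ x, x ∉ closedBall (0:EuclideanSpace ℝ (Fin n)) R →
      fderiv ℝ φ x e = 0 := by
    intro e x hx
    have h0 : φ =ᶠ[nhds x] 0 := notMem_tsupport_iff_eventuallyEq.mp (fun hmem => hx (hR hmem))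
    rw [h0.fderiv_eq]
    rw [show (0 : EuclideanSpace ℝ (Fin n) → ℝ) = fun _ => (0:ℝ) from rfl, fderiv_fun_const]
    simp
  have hCS : ∀ (g : EuclideanSpace ℝ (Fin n) → ℝ), Continuous g →
      (∀ x, x ∉ closedBall (0:EuclideanSpace ℝ (Fin n)) R → g x = 0) → Integrable g volume :=
    fun g hg hsupp => hg.integrable_of_hasCompactSupport
      (HasCompactSupport.intro (isCompact_closedBall _ _) hsupp)
  -- integrability of each summand
  have iLHS : ∀ i : Fin n, Integrable (fun x => φ x ^ 2 * u x *
      fderiv ℝ (fun y => fderiv ℝ u y (EuclideanSpace.single i (1:ℝ))) x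
        (EuclideanSpace.single i (1:ℝ))) volume := by
    intro i
    exact hCS _ (((hφcont.pow 2).mul hucont).mul (hwcont _)) (fun x hx => by simp [hφ_zero x hx])
  have iRHS : ∀ i : Fin n, Integrable
      (fun x => (fderiv ℝ φ x (EuclideanSpace.single i (1:ℝ))) ^ 2 * u x ^ 2) volume := by
    intro i
    -- bounded measurable with compact support
    have hK : ∀ x, |fderiv ℝ φ x (EuclideanSpace.single i (1:ℝ))| ≤ K := by
      intro x
      by_cases hx : DifferentiableAt ℝ φ x
      · have h1 : ‖fderiv ℝ φ x‖ ≤ K := hx.hasFDerivAt.le_of_lipschitz hφ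
        calc |fderiv ℝ φ x (EuclideanSpace.single i (1:ℝ))|
            = ‖fderiv ℝ φ x (EuclideanSpace.single i (1:ℝ))‖ := (Real.norm_eq_abs _).symm
        _ ≤ ‖fderiv ℝ φ x‖ * ‖EuclideanSpace.single i (1:ℝ)‖ := (fderiv ℝ φ x).le_opNorm _
        _ ≤ K * 1 := by
              rw [EuclideanSpace.norm_single, norm_one]
              exact mul_le_mul_of_nonneg_right h1 zero_le_one
        _ = K := mul_one _
      · rw [fderiv_zero_of_not_differentiableAt hx]; simp
    obtain ⟨Mu, hMu0, hMu⟩ : ∃ M : ℝ, 0 ≤ M ∧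
        ∀ x ∈ closedBall (0:EuclideanSpace ℝ (Fin n)) R, |u x| ≤ M := by
      obtain ⟨C, hC⟩ := (isCompact_closedBall (0:EuclideanSpace ℝ (Fin n)) R)
        |>.exists_bound_of_continuousOn hucont.continuousOn
      exact ⟨max C 0, le_max_right _ _,
        fun x hx => ((Real.norm_eq_abs _) ▸ hC x hx).trans (le_max_left _ _)⟩
    apply Integrable.mono'
      ((integrableOn_const measure_closedBall_lt_top.ne).integrable_indicator
        (measurableSet_closedBall (x := (0:EuclideanSpace ℝ (Fin n))) (ε := R))
        (f := fun _ => (K:ℝ)^2 * Mu^2))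
      ((((hp_meas _).pow_const 2).mul (hucont.measurable.pow_const 2)).aestronglyMeasurable)
    filter_upwards with x
    by_cases hx : x ∈ closedBall (0:EuclideanSpace ℝ (Fin n)) R
    · simp only [indicator_of_mem hx, Real.norm_eq_abs, Pi.mul_apply]
      rw [abs_mul, abs_pow, abs_pow]
      have h1 := hK x
      have h2 := hMu x hx
      gcongr
    · rw [indicator_of_notMem hx]
      simp [hp_zero _ x hx]
  calc ∫ x, φ x ^ 2 * u x * heatLap u x
      = ∑ i : Fin n, ∫ x, φ x ^ 2 * u x *
          fderiv ℝ (fun y => fderiv ℝ u y (EuclideanSpace.single i (1:ℝ))) x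
            (EuclideanSpace.single i (1:ℝ)) := by
        rw [← integral_finset_sum _ (fun i _ => iLHS i)]
        congr 1; funext x
        rw [heatLap, Finset.mul_sum]
  _ ≤ ∑ i : Fin n, ∫ x, (fderiv ℝ φ x (EuclideanSpace.single i (1:ℝ))) ^ 2 * u x ^ 2 :=
        Finset.sum_le_sum (fun i _ => ibp_core φ K hφ hφc u hu _
          (by rw [EuclideanSpace.norm_single, norm_one]))
  _ = ∫ x, ‖gradient φ x‖ ^ 2 * u x ^ 2 := by
        rw [← integral_finset_sum _ (fun i _ => iRHS i)]
        congr 1; funext x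
        rw [grad_norm_sq, Finset.sum_mul]

end Aux

set_option maxHeartbeats 1000000 in
/-- **Caccioppoli-type energy inequality.** For a nonnegative smooth subsolution `f` of
the heat equation on `ℝⁿ × (0,1]` with zero initial data in `L²_loc`, and any compactly
supported Lipschitz cutoff `φ`,
`(1/2) ∫ φ² f(t)² ≤ ∫₀ᵗ ∫ |∇φ|² f(s)²` for all `t ∈ (0,1]`. -/
theorem heat_caccioppoli_inequality {n : ℕ}
    (f : ℝ → EuclideanSpace ℝ (Fin n) → ℝ)
    (hf_smooth : ContDiffOn ℝ (⊤ : ℕ∞)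
      (fun p : ℝ × EuclideanSpace ℝ (Fin n) => f p.1 p.2) (Set.Ioc (0:ℝ) 1 ×ˢ Set.univ))
    (hf_nonneg : ∀ t ∈ Set.Ioc (0:ℝ) 1, ∀ x, 0 ≤ f t x)
    (hf_subsol : ∀ t ∈ Set.Ioc (0:ℝ) 1, ∀ x, deriv (fun s => f s x) t ≤ heatLap (f t) x)
    (hf_init : ∀ R > (0:ℝ),
      Tendsto (fun t => ∫⁻ x in ball (0 : EuclideanSpace ℝ (Fin n)) R,
        ENNReal.ofReal ((f t x) ^ 2)) (nhdsWithin 0 (Set.Ioi 0)) (nhds 0)) :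
    ∀ φ : EuclideanSpace ℝ (Fin n) → ℝ, (∃ K, LipschitzWith K φ) → HasCompactSupport φ →
      ∀ t ∈ Set.Ioc (0:ℝ) 1,
        (1 / 2) * (∫ x, (φ x) ^ 2 * (f t x) ^ 2) ≤
          ∫ s in Set.Ioc (0:ℝ) t, ∫ x, ‖gradient φ x‖ ^ 2 * (f s x) ^ 2 := by
  intro φ hKex hφc t ht
  obtain ⟨K, hφ⟩ := hKex
  have hφcont : Continuous φ := hφ.continuous
  obtain ⟨R, hRpos, hR⟩ : ∃ R : ℝ, 0 < R ∧ tsupport φ ⊆ closedBall 0 R := by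
    obtain ⟨R₀, hR₀⟩ := hφc.isBounded.subset_closedBall 0
    exact ⟨max R₀ 1, lt_of_lt_of_le one_pos (le_max_right _ _),
      hR₀.trans (closedBall_subset_closedBall (le_max_left _ _))⟩
  have hφ_zero : ∀ x, x ∉ closedBall (0:EuclideanSpace ℝ (Fin n)) R → φ x = 0 :=
    fun x hx => image_eq_zero_of_notMem_tsupport (fun hmem => hx (hR hmem))
  -- gradient facts
  have hgradK : ∀ x, ‖gradient φ x‖ ≤ K := by
    intro x
    by_cases hx : DifferentiableAt ℝ φ x
    · have h1 : ‖fderiv ℝ φ x‖ ≤ K := hx.hasFDerivAt.le_of_lipschitz hφ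
      simpa [gradient, LinearIsometryEquiv.norm_map] using h1
    · rw [gradient_eq_zero_of_not_differentiableAt hx]; simp
  have hgrad0 : ∀ x, x ∉ closedBall (0:EuclideanSpace ℝ (Fin n)) R → gradient φ x = 0 := by
    intro x hx
    have h0 : φ =ᶠ[nhds x] 0 := notMem_tsupport_iff_eventuallyEq.mp (fun hmem => hx (hR hmem))
    have h1 : fderiv ℝ φ x = 0 := by
      rw [h0.fderiv_eq]
      rw [show (0 : EuclideanSpace ℝ (Fin n) → ℝ) = fun _ => (0:ℝ) from rfl, fderiv_fun_const]
      simp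
    simp [gradient, h1]
  have hgradm : Measurable (fun x => ‖gradient φ x‖ ^ 2) := by
    have h1 : Measurable (fun x => gradient φ x) :=
      (InnerProductSpace.toDual ℝ (EuclideanSpace ℝ (Fin n))).symm.continuous.measurable.comp
        (measurable_fderiv ℝ φ)
    exact (h1.norm.pow_const 2)
  obtain ⟨Mφ, hMφ0, hMφB⟩ : ∃ M : ℝ, 0 ≤ M ∧
      ∀ x ∈ closedBall (0:EuclideanSpace ℝ (Fin n)) R, |φ x| ≤ M := by
    obtain ⟨C, hC⟩ := (isCompact_closedBall (0:EuclideanSpace ℝ (Fin n)) R)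
      |>.exists_bound_of_continuousOn hφcont.continuousOn
    exact ⟨max C 0, le_max_right _ _,
      fun x hx => ((Real.norm_eq_abs _) ▸ hC x hx).trans (le_max_left _ _)⟩
  have hMφ : ∀ x, |φ x| ≤ Mφ := by
    intro x
    by_cases hx : x ∈ closedBall (0:EuclideanSpace ℝ (Fin n)) R
    · exact hMφB x hx
    · rw [hφ_zero x hx]; simpa using hMφ0
  -- the two weights
  have hψ1m : Measurable (fun x => φ x ^ 2) := hφcont.measurable.pow_const 2
  have hψ1b : ∀ x, |φ x ^ 2| ≤ Mφ ^ 2 := by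
    intro x
    rw [abs_pow, sq_abs, ← sq_abs]
    exact pow_le_pow_left₀ (abs_nonneg _) (hMφ x) 2
  have hψ1z : ∀ x, x ∉ closedBall (0:EuclideanSpace ℝ (Fin n)) R → φ x ^ 2 = 0 :=
    fun x hx => by simp [hφ_zero x hx]
  have hψ2b : ∀ x, |(‖gradient φ x‖ ^ 2)| ≤ (K:ℝ) ^ 2 := by
    intro x
    rw [abs_pow, abs_norm]
    exact pow_le_pow_left₀ (norm_nonneg _) (hgradK x) 2
  have hψ2z : ∀ x, x ∉ closedBall (0:EuclideanSpace ℝ (Fin n)) R → ‖gradient φ x‖ ^ 2 = 0 :=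
    fun x hx => by simp [hgrad0 x hx]
  set g : ℝ → ℝ := fun s => ∫ x, φ x ^ 2 * f s x ^ 2 with hg_def
  set hh : ℝ → ℝ := fun s => ∫ x, ‖gradient φ x‖ ^ 2 * f s x ^ 2 with hh_def
  have hgcont : ContinuousOn g (Set.Ioc 0 1) :=
    param_continuousOn f hf_smooth hψ1m hRpos hψ1b hψ1z
  have hhcont : ContinuousOn hh (Set.Ioc 0 1) :=
    param_continuousOn f hf_smooth hgradm hRpos hψ2b hψ2z
  have hgnn : ∀ s, 0 ≤ g s := fun s => integral_nonneg (fun x => by positivity)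
  have hhnn : ∀ s, 0 ≤ hh s := fun s => integral_nonneg (fun x => by positivity)
  -- derivative of g, with the crucial bound
  have hg_deriv : ∀ a ∈ Set.Ioo (0:ℝ) 1, ∃ D, HasDerivAt g D a ∧ D ≤ 2 * hh a := by
    intro a ha
    set ε : ℝ := min a (1 - a) / 2 with hε_def
    have hεpos : 0 < ε := by
      have h1 : 0 < min a (1 - a) := lt_min ha.1 (by linarith [ha.2])
      positivity
    have hε1 : ε ≤ a / 2 := by
      have := min_le_left a (1 - a)
      rw [hε_def]; linarith
    have hε2 : ε ≤ (1 - a) / 2 := by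
      have := min_le_right a (1 - a)
      rw [hε_def]; linarith
    have hIcc : Set.Icc (a - ε) (a + ε) ⊆ Set.Ioo (0:ℝ) 1 := by
      intro s hs
      constructor
      · have := hs.1; linarith [ha.1]
      · have := hs.2; linarith [ha.2]
    have hballIcc : ball a ε ⊆ Set.Icc (a - ε) (a + ε) := by
      intro s hs
      rw [mem_ball, Real.dist_eq, abs_lt] at hs
      constructor <;> linarith [hs.1, hs.2]
    have hballIoo : ball a ε ⊆ Set.Ioo (0:ℝ) 1 := hballIcc.trans hIcc
    -- compact bounds
    have hKc : IsCompact ((Set.Icc (a - ε) (a + ε)) ×ˢ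
        closedBall (0:EuclideanSpace ℝ (Fin n)) R) :=
      isCompact_Icc.prod (isCompact_closedBall _ _)
    have hKsub : (Set.Icc (a - ε) (a + ε)) ×ˢ closedBall (0:EuclideanSpace ℝ (Fin n)) R ⊆
        Set.Ioo (0:ℝ) 1 ×ˢ Set.univ := prod_mono hIcc (subset_univ _)
    obtain ⟨MF, hMF0, hMF⟩ : ∃ M : ℝ, 0 ≤ M ∧ ∀ p ∈ (Set.Icc (a - ε) (a + ε)) ×ˢ
        closedBall (0:EuclideanSpace ℝ (Fin n)) R,
        |f p.1 p.2| ≤ M := by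
      obtain ⟨C, hC⟩ := hKc.exists_bound_of_continuousOn
        (hf_smooth.continuousOn.mono (hKsub.trans (prod_mono Set.Ioo_subset_Ioc_self
          (subset_refl _))))
      exact ⟨max C 0, le_max_right _ _,
        fun p hp => ((Real.norm_eq_abs _) ▸ hC p hp).trans (le_max_left _ _)⟩
    obtain ⟨MD, hMD0, hMD⟩ : ∃ M : ℝ, 0 ≤ M ∧ ∀ p ∈ (Set.Icc (a - ε) (a + ε)) ×ˢ
        closedBall (0:EuclideanSpace ℝ (Fin n)) R,
        |fderiv ℝ (fun q : ℝ × EuclideanSpace ℝ (Fin n) => f q.1 q.2) p (1, 0)| ≤ M := by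
      obtain ⟨C, hC⟩ := hKc.exists_bound_of_continuousOn
        ((fderiv_slice_contOn f hf_smooth).mono hKsub)
      exact ⟨max C 0, le_max_right _ _,
        fun p hp => ((Real.norm_eq_abs _) ▸ hC p hp).trans (le_max_left _ _)⟩
    have ha1 : a ∈ Set.Ioc (0:ℝ) 1 := ⟨ha.1, le_of_lt ha.2⟩
    have hres := hasDerivAt_integral_of_dominated_loc_of_deriv_le (μ := volume)
      (F := fun s x => φ x ^ 2 * f s x ^ 2)
      (F' := fun s x => φ x ^ 2 * (2 * f s x *
        fderiv ℝ (fun q : ℝ × EuclideanSpace ℝ (Fin n) => f q.1 q.2) (s, x) (1, 0)))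
      (x₀ := a)
      (bound := (closedBall (0:EuclideanSpace ℝ (Fin n)) R).indicator
        (fun _ => Mφ ^ 2 * (2 * MF * MD)))
      (ball_mem_nhds a hεpos) ?_ ?_ ?_ ?_ ?_ ?_
    · obtain ⟨hint_d, hder⟩ := hres
      refine ⟨_, hder, ?_⟩
      -- now the bound ∫ D2 a ≤ 2 * hh a
      have hu_s : ContDiff ℝ (⊤:ℕ∞) (fun x => f a x) := slice_smooth f hf_smooth ha1
      have hlapcont : Continuous (heatLap (f a)) := heatLap_continuous _ hu_s
      have int_lap : Integrable (fun x => φ x ^ 2 * (2 * f a x * heatLap (f a) x)) volume := by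
        apply Continuous.integrable_of_hasCompactSupport
        · exact (hφcont.pow 2).mul ((continuous_const.mul hu_s.continuous).mul hlapcont)
        · apply HasCompactSupport.intro (isCompact_closedBall
            (0:EuclideanSpace ℝ (Fin n)) R)
          intro x hx
          simp [hφ_zero x hx]
      have step1 : ∫ x, φ x ^ 2 * (2 * f a x *
          fderiv ℝ (fun q : ℝ × EuclideanSpace ℝ (Fin n) => f q.1 q.2) (a, x) (1, 0))
          ≤ ∫ x, φ x ^ 2 * (2 * f a x * heatLap (f a) x) := by
        apply integral_mono hint_d int_lap
        intro x
        have hdx := slice_hasDerivAt f hf_smooth ha x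
        have heq : deriv (fun τ => f τ x) a =
            fderiv ℝ (fun q : ℝ × EuclideanSpace ℝ (Fin n) => f q.1 q.2) (a, x) (1, 0) :=
          hdx.deriv
        have hle : fderiv ℝ (fun q : ℝ × EuclideanSpace ℝ (Fin n) => f q.1 q.2) (a, x) (1, 0)
            ≤ heatLap (f a) x := heq ▸ hf_subsol a ha1 x
        have h2f : (0:ℝ) ≤ 2 * f a x := by linarith [hf_nonneg a ha1 x]
        exact mul_le_mul_of_nonneg_left
          (mul_le_mul_of_nonneg_left hle h2f) (sq_nonneg (φ x))
      have step2 : ∫ x, φ x ^ 2 * (2 * f a x * heatLap (f a) x)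
          = 2 * ∫ x, φ x ^ 2 * f a x * heatLap (f a) x := by
        rw [← integral_const_mul]
        congr 1; funext x; ring
      have step3 : ∫ x, φ x ^ 2 * f a x * heatLap (f a) x
          ≤ ∫ x, ‖gradient φ x‖ ^ 2 * f a x ^ 2 :=
        ibp_full φ K hφ hφc (fun x => f a x) hu_s
      calc ∫ x, φ x ^ 2 * (2 * f a x *
            fderiv ℝ (fun q : ℝ × EuclideanSpace ℝ (Fin n) => f q.1 q.2) (a, x) (1, 0))
          ≤ ∫ x, φ x ^ 2 * (2 * f a x * heatLap (f a) x) := step1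
      _ = 2 * ∫ x, φ x ^ 2 * f a x * heatLap (f a) x := step2
      _ ≤ 2 * ∫ x, ‖gradient φ x‖ ^ 2 * f a x ^ 2 := by linarith [step3]
      _ = 2 * hh a := by rw [hh_def]
    · -- measurability of F s near a
      filter_upwards [isOpen_ball.mem_nhds (mem_ball_self hεpos)] with s hs
      have hs1 : s ∈ Set.Ioc (0:ℝ) 1 := Set.Ioo_subset_Ioc_self (hballIoo hs)
      exact ((hφcont.pow 2).mul
        ((slice_smooth f hf_smooth hs1).continuous.pow 2)).aestronglyMeasurable
    · -- integrability of F a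
      apply Continuous.integrable_of_hasCompactSupport
      · exact (hφcont.pow 2).mul ((slice_smooth f hf_smooth ha1).continuous.pow 2)
      · apply HasCompactSupport.intro (isCompact_closedBall (0:EuclideanSpace ℝ (Fin n)) R)
        intro x hx
        simp [hφ_zero x hx]
    · -- measurability of F' a
      have hc : Continuous (fun x : EuclideanSpace ℝ (Fin n) =>
          fderiv ℝ (fun q : ℝ × EuclideanSpace ℝ (Fin n) => f q.1 q.2) (a, x) (1, 0)) := by
        apply (fderiv_slice_contOn f hf_smooth).comp_continuous
          (continuous_const.prodMk continuous_id)
        intro x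
        exact ⟨ha, mem_univ _⟩
      exact ((hφcont.pow 2).mul ((continuous_const.mul
        (slice_smooth f hf_smooth ha1).continuous).mul hc)).aestronglyMeasurable
    · -- uniform bound on the ball
      filter_upwards with x
      intro s hs
      by_cases hx : x ∈ closedBall (0:EuclideanSpace ℝ (Fin n)) R
      · rw [indicator_of_mem hx]
        have hp : (s, x) ∈ (Set.Icc (a - ε) (a + ε)) ×ˢ
            closedBall (0:EuclideanSpace ℝ (Fin n)) R := ⟨hballIcc hs, hx⟩
        have h1 := hMF (s, x) hp
        have h2 := hMD (s, x) hp
        have h3 := hMφ x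
        rw [Real.norm_eq_abs, abs_mul, abs_mul, abs_mul, abs_pow, sq_abs, ← sq_abs, abs_two]
        gcongr
      · rw [indicator_of_notMem hx]
        simp [hφ_zero x hx]
    · exact (integrableOn_const measure_closedBall_lt_top.ne).integrable_indicator
        measurableSet_closedBall
    · -- differentiability in s on the ball
      filter_upwards with x
      intro s hs
      have hdx := slice_hasDerivAt f hf_smooth (hballIoo hs) x
      have h1 := (hdx.pow 2).const_mul (φ x ^ 2)
      simpa [pow_one] using h1
  -- bound near zero from the initial condition
  have hev : ∀ᶠ s in nhdsWithin (0:ℝ) (Set.Ioi 0),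
      (∫⁻ x in ball (0:EuclideanSpace ℝ (Fin n)) (R+1), ENNReal.ofReal (f s x ^ 2)) < 1 :=
    (hf_init (R+1) (by linarith)).eventually_lt_const (by norm_num)
  obtain ⟨δ, hδpos, hδ⟩ : ∃ δ > (0:ℝ), ∀ s, 0 < s → s < δ →
      (∫⁻ x in ball (0:EuclideanSpace ℝ (Fin n)) (R+1), ENNReal.ofReal (f s x ^ 2)) ≤ 1 := by
    rw [eventually_nhdsWithin_iff] at hev
    rw [Metric.eventually_nhds_iff] at hev
    obtain ⟨δ, hδpos, hδ⟩ := hev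
    refine ⟨δ, hδpos, fun s hs1 hs2 => ?_⟩
    have : dist s 0 < δ := by rw [Real.dist_eq, sub_zero, abs_of_pos hs1]; exact hs2
    exact le_of_lt (hδ this hs1)
  -- global bound for hh on Ioc 0 1 and integrability
  obtain ⟨C1, hC1⟩ := (isCompact_Icc (a := δ) (b := 1)).exists_bound_of_continuousOn
    (hhcont.mono (fun s hs => ⟨lt_of_lt_of_le hδpos hs.1, hs.2⟩))
  have hhbound : ∀ s ∈ Set.Ioc (0:ℝ) 1, ‖hh s‖ ≤ max ((K:ℝ)^2) C1 := by
    intro s hs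
    rw [Real.norm_eq_abs, abs_of_nonneg (hhnn s)]
    by_cases hcase : s < δ
    · have h1 := param_le f hf_smooth hgradm hRpos hψ2b hψ2z (by positivity) hs
      have h2 : (∫⁻ x in ball (0:EuclideanSpace ℝ (Fin n)) (R+1),
          ENNReal.ofReal (f s x ^ 2)).toReal ≤ 1 := by
        have h3 := ENNReal.toReal_mono ENNReal.one_ne_top (hδ s hs.1 hcase)
        simpa using h3
      have h4 : hh s ≤ (K:ℝ)^2 * 1 := by
        rw [hh_def]
        refine h1.trans ?_
        gcongr
      refine (h4.trans (by linarith)).trans (le_max_left _ _)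
    · have hmem : s ∈ Set.Icc δ 1 := ⟨not_lt.mp hcase, hs.2⟩
      have := hC1 s hmem
      rw [Real.norm_eq_abs] at this
      exact ((le_abs_self _).trans this).trans (le_max_right _ _)
  have hIntOn : IntegrableOn hh (Set.Ioc (0:ℝ) 1) volume := by
    apply Integrable.mono' (g := fun _ => max ((K:ℝ)^2) C1)
      (integrableOn_const measure_Ioc_lt_top.ne)
      (hhcont.aestronglyMeasurable measurableSet_Ioc)
    rw [ae_restrict_iff' measurableSet_Ioc]
    filter_upwards with s hs using hhbound s hs
  have hIocsub : Set.Ioc (0:ℝ) t ⊆ Set.Ioc (0:ℝ) 1 := Set.Ioc_subset_Ioc le_rfl ht.2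
  have hIntOn_t : IntegrableOn hh (Set.Ioc (0:ℝ) t) volume := hIntOn.mono_set hIocsub
  -- key estimate for each ε
  have key : ∀ ε ∈ Set.Ioo (0:ℝ) t, g t ≤ g ε + 2 * ∫ τ in Set.Ioc (0:ℝ) t, hh τ := by
    intro ε hε
    have hIccsub : Set.Icc ε t ⊆ Set.Ioc (0:ℝ) 1 :=
      fun s hs => ⟨lt_of_lt_of_le hε.1 hs.1, le_trans hs.2 ht.2⟩
    have hIntOn' : IntegrableOn hh (Set.Icc ε t) volume := hIntOn.mono_set hIccsub
    set A : ℝ → ℝ := fun s => ∫ τ in ε..s, hh τ with hA_def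
    have hA_cont : ContinuousOn A (Set.Icc ε t) := by
      have h1 := intervalIntegral.continuousOn_primitive_interval (a := ε) (b := t)
        (f := hh) (μ := volume) (by rwa [uIcc_of_le hε.2.le])
      rwa [uIcc_of_le hε.2.le] at h1
    set G2 : ℝ → ℝ := fun s => 2 * A s - g s with hG2_def
    have hG2cont : ContinuousOn G2 (Set.Icc ε t) :=
      (continuousOn_const.mul hA_cont).sub (hgcont.mono hIccsub)
    have hDer : ∀ s ∈ Set.Ioo ε t, ∃ D, HasDerivAt G2 (2 * hh s - D) s ∧ D ≤ 2 * hh s := by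
      intro s hs
      have hsIoo : s ∈ Set.Ioo (0:ℝ) 1 :=
        ⟨lt_trans hε.1 hs.1, lt_of_lt_of_le hs.2 ht.2⟩
      obtain ⟨D, hD, hDle⟩ := hg_deriv s hsIoo
      have hA' : HasDerivAt A (hh s) s := by
        apply intervalIntegral.integral_hasDerivAt_right
        · rw [intervalIntegrable_iff]
          apply hIntOn.mono_set
          intro τ hτ
          rw [uIoc_of_le hs.1.le] at hτ
          exact ⟨lt_trans hε.1 hτ.1, le_trans hτ.2 (le_trans hs.2.le ht.2)⟩
        · exact ⟨Set.Ioo (0:ℝ) 1, isOpen_Ioo.mem_nhds hsIoo,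
            (hhcont.mono Set.Ioo_subset_Ioc_self).aestronglyMeasurable measurableSet_Ioo⟩
        · exact hhcont.continuousAt (Ioc_mem_nhds hsIoo.1 hsIoo.2)
      exact ⟨D, (hA'.const_mul 2).sub hD, hDle⟩
    have hmono : MonotoneOn G2 (Set.Icc ε t) := by
      apply monotoneOn_of_deriv_nonneg (convex_Icc ε t) hG2cont
      · intro s hs
        rw [interior_Icc] at hs
        obtain ⟨D, hD, _⟩ := hDer s hs
        exact hD.differentiableAt.differentiableWithinAt
      · intro s hs
        rw [interior_Icc] at hs
        obtain ⟨D, hD, hDle⟩ := hDer s hs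
        rw [hD.deriv]
        linarith
    have happ : G2 ε ≤ G2 t :=
      hmono ⟨le_refl _, hε.2.le⟩ ⟨hε.2.le, le_refl _⟩ hε.2.le
    have hAε : A ε = 0 := intervalIntegral.integral_same
    have hAt : A t = ∫ τ in Set.Ioc ε t, hh τ := intervalIntegral.integral_of_le hε.2.le
    have hmono2 : ∫ τ in Set.Ioc ε t, hh τ ≤ ∫ τ in Set.Ioc (0:ℝ) t, hh τ := by
      apply setIntegral_mono_set hIntOn_t
      · exact Filter.Eventually.of_forall (fun τ => hhnn τ)
      · exact HasSubset.Subset.eventuallyLE (Set.Ioc_subset_Ioc hε.1.le le_rfl)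
    rw [hG2_def] at happ
    simp only [hAε, hAt] at happ
    linarith
  -- the limit ε → 0
  have htendu : Tendsto (fun s : ℝ => Mφ^2 * (∫⁻ x in ball (0:EuclideanSpace ℝ (Fin n)) (R+1),
      ENNReal.ofReal (f s x ^ 2)).toReal) (nhdsWithin 0 (Set.Ioi 0)) (nhds 0) := by
    have h2 := hf_init (R+1) (by linarith)
    have h3 : Tendsto (fun s : ℝ => (∫⁻ x in ball (0:EuclideanSpace ℝ (Fin n)) (R+1),
        ENNReal.ofReal (f s x ^ 2)).toReal) (nhdsWithin 0 (Set.Ioi 0)) (nhds 0) := by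
      have h4 := (ENNReal.tendsto_toReal (by simp : (0:ENNReal) ≠ ⊤)).comp h2
      simpa [Function.comp_def] using h4
    have h5 := h3.const_mul (Mφ^2)
    simpa using h5
  have hevIoc : ∀ᶠ s in nhdsWithin (0:ℝ) (Set.Ioi 0), s ∈ Set.Ioo (0:ℝ) t := by
    have h1 : ∀ᶠ s in nhdsWithin (0:ℝ) (Set.Ioi 0), s < t :=
      eventually_nhdsWithin_of_eventually_nhds (eventually_lt_nhds ht.1)
    filter_upwards [h1, self_mem_nhdsWithin] with s h2 h3
    exact ⟨h3, h2⟩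
  have htend : Tendsto g (nhdsWithin (0:ℝ) (Set.Ioi 0)) (nhds 0) := by
    apply squeeze_zero' (Filter.Eventually.of_forall hgnn)
    · filter_upwards [hevIoc] with s hs
      have hs1 : s ∈ Set.Ioc (0:ℝ) 1 := ⟨hs.1, le_trans hs.2.le ht.2⟩
      exact param_le f hf_smooth hψ1m hRpos hψ1b hψ1z (by positivity) hs1
    · exact htendu
  have hfinal : ∀ᶠ ε in nhdsWithin (0:ℝ) (Set.Ioi 0),
      g t ≤ g ε + 2 * ∫ τ in Set.Ioc (0:ℝ) t, hh τ := by
    filter_upwards [hevIoc] with ε hε using key ε hε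
  have hlim : Tendsto (fun ε => g ε + 2 * ∫ τ in Set.Ioc (0:ℝ) t, hh τ)
      (nhdsWithin (0:ℝ) (Set.Ioi 0)) (nhds (0 + 2 * ∫ τ in Set.Ioc (0:ℝ) t, hh τ)) :=
    htend.add tendsto_const_nhds
  have hfin : g t ≤ 0 + 2 * ∫ τ in Set.Ioc (0:ℝ) t, hh τ := ge_of_tendsto hlim hfinal
  have hgoal : g t = ∫ x, (φ x) ^ 2 * (f t x) ^ 2 := by rw [hg_def]
  linarith [hfin]
end

section
/- Let n ≥ 3. There exist a continuous nonnegative function u₀ ∈ L¹(ℝⁿ) and a constant C(n) > 0 such that the heat-kernel convolution u(x,t) = ∫_{ℝⁿ} (4πt)^{−n/2} e^{−|x−y|²/(4t)} u₀(y) dy satisfies: (i) 0 ≤ u(x,t) ≤ ‖u₀‖_{L¹} (4πt)^{−n/2} for all (x,t) ∈ ℝⁿ × (0,1], so u lies in the uniqueness class of Theorem 1; and (ii) for every integer i ≥ 1, ∫₀¹ ∫_{B(0,i+1)} u(x,t)² dx dt ≥ C(n) e^{((n−2)/n) i³}, so u violates the growth condition ∫₀¹ ∫_{B(0,r)} u²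 ≤ e^{L(r)} for every function L with ∫₁^∞ r/L(r) dr = ∞. -/
open MeasureTheory Set Metric Real

/-- The heat-kernel convolution of an initial datum `u₀` on `ℝⁿ`. -/
noncomputable def heatConv {n : ℕ} (u₀ : EuclideanSpace ℝ (Fin n) → ℝ)
    (x : EuclideanSpace ℝ (Fin n)) (t : ℝ) : ℝ :=
  ∫ y, (4 * π * t) ^ (-(n:ℝ) / 2) * Real.exp (-‖x - y‖ ^ 2 / (4 * t)) * u₀ y


namespace SpikedEx

variable {n : ℕ}

noncomputable def cen (n i : ℕ) : EuclideanSpace ℝ (Fin n) :=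
  if h : 0 < n then EuclideanSpace.single ⟨0, h⟩ (i : ℝ) else 0

noncomputable def rho (n i : ℕ) : ℝ := (1/2) * Real.exp (-(((i:ℝ)^3 + 13*i)/n))

noncomputable def hgt (n i : ℕ) : ℝ := Real.exp (-(2*(i:ℝ))) / (rho n i)^n

noncomputable def bump (n i : ℕ) (y : EuclideanSpace ℝ (Fin n)) : ℝ :=
  hgt n i * max 0 (1 - ‖y - cen n i‖ / rho n i)

noncomputable def u0 (n : ℕ) (y : EuclideanSpace ℝ (Fin n)) : ℝ := ∑ᶠ i, bump n i y

lemma rho_pos (n i : ℕ) : 0 < rho n i := by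
  unfold rho; positivity

lemma rho_le_half (n i : ℕ) : rho n i ≤ 1/2 := by
  unfold rho
  have h1 : Real.exp (-(((i:ℝ)^3 + 13*i)/n)) ≤ 1 := by
    rw [Real.exp_le_one_iff]
    have hi : (0:ℝ) ≤ (i:ℝ)^3 + 13*i := by positivity
    have hn : (0:ℝ) ≤ (n:ℝ) := Nat.cast_nonneg n
    have := div_nonneg hi hn
    linarith
  linarith

lemma hgt_pos (n i : ℕ) : 0 < hgt n i := by
  unfold hgt
  exact div_pos (Real.exp_pos _) (pow_pos (rho_pos n i) n)

lemma bump_nonneg (n i : ℕ) (y : EuclideanSpace ℝ (Fin n)) : 0 ≤ bump n i y :=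
  mul_nonneg (hgt_pos n i).le (le_max_left _ _)

lemma bump_le (n i : ℕ) (y : EuclideanSpace ℝ (Fin n)) : bump n i y ≤ hgt n i := by
  unfold bump
  have h2 : max 0 (1 - ‖y - cen n i‖ / rho n i) ≤ 1 := by
    apply max_le (by norm_num)
    have : 0 ≤ ‖y - cen n i‖ / rho n i := div_nonneg (norm_nonneg _) (rho_pos n i).le
    linarith
  calc hgt n i * max 0 (1 - ‖y - cen n i‖ / rho n i) ≤ hgt n i * 1 :=
        mul_le_mul_of_nonneg_left h2 (hgt_pos n i).le
    _ = hgt n i := mul_one _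

lemma bump_continuous (n i : ℕ) : Continuous (bump n i) := by
  unfold bump
  exact continuous_const.mul (continuous_const.max
    (continuous_const.sub ((continuous_id.sub continuous_const).norm.div_const _)))

lemma bump_support (n i : ℕ) {y : EuclideanSpace ℝ (Fin n)} (h : bump n i y ≠ 0) :
    ‖y - cen n i‖ < rho n i := by
  by_contra hc
  push_neg at hc
  apply h
  unfold bump
  have : 1 - ‖y - cen n i‖ / rho n i ≤ 0 := by
    have := (one_le_div (rho_pos n i)).2 hc
    linarith
  rw [max_eq_left this, mul_zero]

lemma abs_coord_le (x : EuclideanSpace ℝ (Fin n)) (j : Fin n) : |x j| ≤ ‖x‖ := by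
  rw [EuclideanSpace.norm_eq]
  rw [← Real.sqrt_sq_eq_abs]
  apply Real.sqrt_le_sqrt
  have : |x j|^2 ≤ ∑ i, ‖x i‖^2 := by
    have := Finset.single_le_sum (f := fun i => ‖x i‖^2)
      (fun i _ => by positivity) (Finset.mem_univ j)
    simpa [Real.norm_eq_abs, sq_abs] using this
  simpa [sq_abs] using this

lemma cen_coord (hn : 0 < n) (i : ℕ) : cen n i ⟨0, hn⟩ = (i : ℝ) := by
  rw [cen, dif_pos hn, EuclideanSpace.single_apply, if_pos rfl]

lemma norm_cen (hn : 0 < n) (i : ℕ) : ‖cen n i‖ = (i : ℝ) := by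
  rw [cen, dif_pos hn, EuclideanSpace.norm_single, Real.norm_eq_abs,
    abs_of_nonneg (Nat.cast_nonneg i)]

lemma bump_coord (hn : 0 < n) {i : ℕ} {y : EuclideanSpace ℝ (Fin n)} (h : bump n i y ≠ 0) :
    |y ⟨0, hn⟩ - (i:ℝ)| < 1/2 := by
  have h1 := bump_support n i h
  have h2 : |(y - cen n i) ⟨0, hn⟩| ≤ ‖y - cen n i‖ := abs_coord_le _ _
  have h3 : (y - cen n i) ⟨0, hn⟩ = y ⟨0, hn⟩ - (i:ℝ) := by
    simp [cen_coord hn i]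
  rw [h3] at h2
  calc |y ⟨0, hn⟩ - (i:ℝ)| ≤ ‖y - cen n i‖ := h2
    _ < rho n i := h1
    _ ≤ 1/2 := rho_le_half n i

lemma bump_disjoint (hn : 0 < n) {i j : ℕ} {y : EuclideanSpace ℝ (Fin n)}
    (hi : bump n i y ≠ 0) (hj : bump n j y ≠ 0) : i = j := by
  have h1 := bump_coord hn hi
  have h2 := bump_coord hn hj
  by_contra hne
  have : (1:ℝ) ≤ |(i:ℝ) - (j:ℝ)| := by
    have h4 : (1:ℤ) ≤ |(i:ℤ) - (j:ℤ)| := by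
      rcases lt_or_gt_of_ne hne with h | h
      · rw [abs_of_nonpos (by omega)]; omega
      · rw [abs_of_nonneg (by omega)]; omega
    have h5 : ((1:ℤ):ℝ) ≤ ((|(i:ℤ) - (j:ℤ)|:ℤ):ℝ) := Int.cast_le.2 h4
    push_cast at h5
    convert h5 using 2
  have habs : |(i:ℝ) - (j:ℝ)| ≤ |y ⟨0, hn⟩ - (i:ℝ)| + |y ⟨0, hn⟩ - (j:ℝ)| := by
    have := abs_sub_abs_le_abs_sub ((i:ℝ) - (j:ℝ)) 0
    calc |(i:ℝ) - (j:ℝ)| = |((i:ℝ) - y ⟨0,hn⟩) + (y ⟨0,hn⟩ - (j:ℝ))| := by ring_nf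
      _ ≤ |(i:ℝ) - y ⟨0,hn⟩| + |y ⟨0,hn⟩ - (j:ℝ)| := abs_add_le _ _
      _ = |y ⟨0,hn⟩ - (i:ℝ)| + |y ⟨0,hn⟩ - (j:ℝ)| := by rw [abs_sub_comm]
  linarith


lemma u0_nonneg (y : EuclideanSpace ℝ (Fin n)) : 0 ≤ u0 n y :=
  finsum_nonneg fun i => bump_nonneg n i y

lemma bump_le_u0 (hn : 0 < n) (i : ℕ) (y : EuclideanSpace ℝ (Fin n)) :
    bump n i y ≤ u0 n y := by
  by_cases hz : bump n i y = 0
  · rw [hz]; exact u0_nonneg y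
  · have : u0 n y = bump n i y :=
      finsum_eq_single _ i (fun j hj => by
        by_contra hc
        exact hj (bump_disjoint hn hc hz))
    rw [this]

lemma ofReal_u0 (hn : 0 < n) (y : EuclideanSpace ℝ (Fin n)) :
    ENNReal.ofReal (u0 n y) = ∑' i, ENNReal.ofReal (bump n i y) := by
  by_cases h : ∃ i, bump n i y ≠ 0
  · obtain ⟨i, hi⟩ := h
    have h1 : u0 n y = bump n i y :=
      finsum_eq_single _ i (fun j hj => by
        by_contra hc
        exact hj (bump_disjoint hn hc hi))
    have h2 : ∑' j, ENNReal.ofReal (bump n j y) = ENNReal.ofReal (bump n i y) :=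
      tsum_eq_single i (fun j hj => by
        by_contra hc
        apply hj
        apply bump_disjoint hn _ hi
        intro hz
        exact hc (by rw [hz, ENNReal.ofReal_zero]))
    rw [h1, h2]
  · push_neg at h
    have h1 : u0 n y = 0 := finsum_eq_zero_of_forall_eq_zero h
    rw [h1]
    simp [h]

lemma supports_locallyFinite (hn : 0 < n) :
    LocallyFinite fun i => Function.support (fun y => bump n i y) := by
  intro x
  refine ⟨ball x (1/2), ball_mem_nhds x (by norm_num), ?_⟩
  apply Set.Finite.subset (Set.finite_Iio (⌈x ⟨0, hn⟩⌉₊ + 2))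
  rintro i ⟨y, hy1, hy2⟩
  have h1 : ‖y - cen n i‖ < rho n i := bump_support n i hy1
  have h2 : |(y - cen n i) ⟨0, hn⟩| ≤ ‖y - cen n i‖ := abs_coord_le _ _
  have h3 : (y - cen n i) ⟨0, hn⟩ = y ⟨0, hn⟩ - (i:ℝ) := by simp [cen_coord hn i]
  have h4 : |y ⟨0, hn⟩ - (i:ℝ)| < 1/2 := by
    rw [h3] at h2
    calc |y ⟨0, hn⟩ - (i:ℝ)| ≤ ‖y - cen n i‖ := h2
      _ < rho n i := h1
      _ ≤ 1/2 := rho_le_half n i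
  have h5 : dist y x < 1/2 := mem_ball.1 hy2
  have h6 : |y ⟨0, hn⟩ - x ⟨0, hn⟩| < 1/2 := by
    have := abs_coord_le (y - x) ⟨0, hn⟩
    have h7 : (y - x) ⟨0, hn⟩ = y ⟨0, hn⟩ - x ⟨0, hn⟩ := by simp
    rw [h7] at this
    calc |y ⟨0, hn⟩ - x ⟨0, hn⟩| ≤ ‖y - x‖ := this
      _ = dist y x := (dist_eq_norm y x).symm
      _ < 1/2 := h5
  have h8 : (i : ℝ) < x ⟨0, hn⟩ + 1 := by
    have := abs_sub_abs_le_abs_sub (y ⟨0,hn⟩) ((i:ℝ))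
    have ha := abs_lt.1 h4
    have hb := abs_lt.1 h6
    linarith [ha.1, ha.2, hb.1, hb.2]
  have h9 : (i:ℝ) < (⌈x ⟨0, hn⟩⌉₊ + 2 : ℕ) := by
    push_cast
    calc (i:ℝ) < x ⟨0,hn⟩ + 1 := h8
      _ ≤ ⌈x ⟨0,hn⟩⌉₊ + 1 := by linarith [Nat.le_ceil (x ⟨0,hn⟩)]
      _ ≤ _ := by linarith
  exact_mod_cast Nat.cast_lt.1 h9

lemma u0_continuous (hn : 0 < n) : Continuous (u0 n) :=
  continuous_finsum (fun i => bump_continuous n i) (supports_locallyFinite hn)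

lemma lintegral_bump_le (hn : 0 < n) (i : ℕ) :
    ∫⁻ y, ENNReal.ofReal (bump n i y) ≤
      ENNReal.ofReal (Real.exp (-(2*(i:ℝ)))) * volume (ball (0 : EuclideanSpace ℝ (Fin n)) 1) := by
  have hb : ∀ y, ENNReal.ofReal (bump n i y) ≤
      (ball (cen n i) (rho n i)).indicator (fun _ => ENNReal.ofReal (hgt n i)) y := by
    intro y
    by_cases hy : y ∈ ball (cen n i) (rho n i)
    · rw [Set.indicator_of_mem hy]
      exact ENNReal.ofReal_le_ofReal (bump_le n i y)
    · rw [Set.indicator_of_notMem hy]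
      have : bump n i y = 0 := by
        by_contra hc
        exact hy (mem_ball.2 (by rw [dist_eq_norm]; exact bump_support n i hc))
      simp [this]
  calc ∫⁻ y, ENNReal.ofReal (bump n i y)
      ≤ ∫⁻ y, (ball (cen n i) (rho n i)).indicator (fun _ => ENNReal.ofReal (hgt n i)) y :=
        lintegral_mono hb
    _ = ENNReal.ofReal (hgt n i) * volume (ball (cen n i) (rho n i)) := by
        rw [lintegral_indicator measurableSet_ball, setLIntegral_const]
    _ = ENNReal.ofReal (hgt n i) * (ENNReal.ofReal ((rho n i)^n) *
          volume (ball (0 : EuclideanSpace ℝ (Fin n)) 1)) := by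
        haveI : Nonempty (Fin n) := ⟨⟨0, hn⟩⟩
        haveI : Inhabited (Fin n) := ⟨⟨0, hn⟩⟩
        haveI : Nontrivial (EuclideanSpace ℝ (Fin n)) := inferInstance
        rw [Measure.addHaar_ball volume (cen n i) (rho_pos n i).le,
          finrank_euclideanSpace_fin]
    _ = ENNReal.ofReal (Real.exp (-(2*(i:ℝ)))) * volume (ball (0 : EuclideanSpace ℝ (Fin n)) 1) := by
        rw [← mul_assoc, ← ENNReal.ofReal_mul (hgt_pos n i).le]
        congr 2
        rw [hgt, div_mul_cancel₀]
        exact (pow_pos (rho_pos n i) n).ne'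

lemma lintegral_u0_fin (hn : 0 < n) :
    ∫⁻ y, ENNReal.ofReal (u0 n y) < ⊤ := by
  have hme : ∀ i : ℕ, AEMeasurable (fun y => ENNReal.ofReal (bump n i y)) volume :=
    fun i => ((bump_continuous n i).measurable.ennreal_ofReal).aemeasurable
  calc ∫⁻ y, ENNReal.ofReal (u0 n y)
      = ∫⁻ y, ∑' i, ENNReal.ofReal (bump n i y) := by
        congr 1; funext y; exact ofReal_u0 hn y
    _ = ∑' i, ∫⁻ y, ENNReal.ofReal (bump n i y) := lintegral_tsum hme
    _ ≤ ∑' i : ℕ, ENNReal.ofReal (Real.exp (-(2*(i:ℝ)))) *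
          volume (ball (0 : EuclideanSpace ℝ (Fin n)) 1) :=
        ENNReal.tsum_le_tsum (fun i => lintegral_bump_le hn i)
    _ = (∑' i : ℕ, ENNReal.ofReal (Real.exp (-2)) ^ i) *
          volume (ball (0 : EuclideanSpace ℝ (Fin n)) 1) := by
        rw [ENNReal.tsum_mul_right]
        congr 1
        apply tsum_congr
        intro i
        rw [← ENNReal.ofReal_pow (Real.exp_pos _).le, ← Real.exp_nat_mul]
        ring_nf
    _ < ⊤ := by
        apply ENNReal.mul_lt_top
        · rw [ENNReal.tsum_geometric]
          apply ENNReal.inv_lt_top.2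
          rw [tsub_pos_iff_lt, ENNReal.ofReal_lt_one]
          exact Real.exp_lt_one_iff.2 (by norm_num)
        · exact measure_ball_lt_top

lemma u0_integrable (hn : 0 < n) : Integrable (u0 n) := by
  refine ⟨(u0_continuous hn).aestronglyMeasurable, ?_⟩
  rw [hasFiniteIntegral_iff_ofReal (ae_of_all _ u0_nonneg)]
  exact lintegral_u0_fin hn

lemma kernel_le_one {x y : EuclideanSpace ℝ (Fin n)} {t : ℝ} (ht : 0 < t) :
    Real.exp (-‖x - y‖ ^ 2 / (4 * t)) ≤ 1 := by
  rw [Real.exp_le_one_iff]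
  have h1 : (0:ℝ) ≤ ‖x - y‖ ^ 2 := by positivity
  exact div_nonpos_of_nonpos_of_nonneg (by linarith) (by linarith)

lemma integrand_continuous (u₀ : EuclideanSpace ℝ (Fin n) → ℝ) (hu : Continuous u₀)
    (x : EuclideanSpace ℝ (Fin n)) (t : ℝ) :
    Continuous (fun y => (4 * π * t) ^ (-(n:ℝ) / 2) * Real.exp (-‖x - y‖ ^ 2 / (4 * t)) * u₀ y) := by
  apply Continuous.mul _ hu
  apply continuous_const.mul
  apply Real.continuous_exp.comp
  apply Continuous.div_const
  exact ((continuous_const.sub continuous_id).norm.pow 2).neg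

lemma integrand_integrable (u₀ : EuclideanSpace ℝ (Fin n) → ℝ) (hu : Continuous u₀)
    (hnn : ∀ y, 0 ≤ u₀ y) (hint : Integrable u₀)
    (x : EuclideanSpace ℝ (Fin n)) {t : ℝ} (ht : 0 < t) :
    Integrable (fun y => (4 * π * t) ^ (-(n:ℝ) / 2) * Real.exp (-‖x - y‖ ^ 2 / (4 * t)) * u₀ y) := by
  have hc : 0 ≤ (4 * π * t) ^ (-(n:ℝ) / 2) := by positivity
  apply Integrable.mono (hint.const_mul ((4 * π * t) ^ (-(n:ℝ) / 2)))
    (integrand_continuous u₀ hu x t).aestronglyMeasurable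
  apply ae_of_all
  intro y
  have h1 := kernel_le_one (x := x) (y := y) ht
  have h2 := (Real.exp_pos (-‖x - y‖ ^ 2 / (4 * t))).le
  rw [Real.norm_eq_abs, Real.norm_eq_abs,
    abs_of_nonneg (mul_nonneg (mul_nonneg hc h2) (hnn y)),
    abs_of_nonneg (mul_nonneg hc (hnn y))]
  have h3 := mul_le_mul_of_nonneg_right (mul_le_mul_of_nonneg_left h1 hc) (hnn y)
  simpa using h3

lemma heatConv_nonneg (u₀ : EuclideanSpace ℝ (Fin n) → ℝ) (hnn : ∀ y, 0 ≤ u₀ y)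
    (x : EuclideanSpace ℝ (Fin n)) {t : ℝ} (ht : 0 < t) :
    0 ≤ heatConv u₀ x t := by
  apply integral_nonneg
  intro y
  have : 0 ≤ (4 * π * t) ^ (-(n:ℝ) / 2) := by positivity
  exact mul_nonneg (mul_nonneg this (Real.exp_pos _).le) (hnn y)

lemma heatConv_le (u₀ : EuclideanSpace ℝ (Fin n) → ℝ) (hu : Continuous u₀)
    (hnn : ∀ y, 0 ≤ u₀ y) (hint : Integrable u₀)
    (x : EuclideanSpace ℝ (Fin n)) {t : ℝ} (ht : 0 < t) :
    heatConv u₀ x t ≤ (∫ y, |u₀ y|) * (4 * π * t) ^ (-(n:ℝ) / 2) := by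
  have hc : 0 ≤ (4 * π * t) ^ (-(n:ℝ) / 2) := by positivity
  have h1 : heatConv u₀ x t ≤ ∫ y, (4 * π * t) ^ (-(n:ℝ) / 2) * u₀ y := by
    apply integral_mono (integrand_integrable u₀ hu hnn hint x ht) (hint.const_mul _)
    intro y
    have h2 := kernel_le_one (x := x) (y := y) ht
    have h3 := mul_le_mul_of_nonneg_right (mul_le_mul_of_nonneg_left h2 hc) (hnn y)
    simpa using h3
  calc heatConv u₀ x t ≤ ∫ y, (4 * π * t) ^ (-(n:ℝ) / 2) * u₀ y := h1
    _ = (4 * π * t) ^ (-(n:ℝ) / 2) * ∫ y, u₀ y := integral_const_mul _ _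
    _ = (∫ y, |u₀ y|) * (4 * π * t) ^ (-(n:ℝ) / 2) := by
        rw [mul_comm]
        congr 1
        apply integral_congr_ae
        apply ae_of_all
        intro y
        exact (abs_of_nonneg (hnn y)).symm

noncomputable def wvol (n : ℕ) : ℝ :=
  (volume (ball (0 : EuclideanSpace ℝ (Fin n)) 1)).toReal

noncomputable def kap (n : ℕ) : ℝ :=
  Real.exp (-1) * (8*π)^(-(n:ℝ)/2) * ((1:ℝ)/2)^(n+1) * wvol n

lemma wvol_pos (hn : 0 < n) : 0 < wvol n := by
  haveI : Inhabited (Fin n) := ⟨⟨0, hn⟩⟩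
  haveI : Nontrivial (EuclideanSpace ℝ (Fin n)) := inferInstance
  apply ENNReal.toReal_pos
  · exact (measure_ball_pos volume _ one_pos).ne'
  · exact measure_ball_lt_top.ne

lemma kap_pos (hn : 0 < n) : 0 < kap n := by
  unfold kap
  have h1 : (0:ℝ) < 8*π := by positivity
  have := wvol_pos hn
  positivity

lemma vol_ball_toReal (hn : 0 < n) (p : EuclideanSpace ℝ (Fin n)) {r : ℝ} (hr : 0 ≤ r) :
    (volume (ball p r)).toReal = r^n * wvol n := by
  haveI : Inhabited (Fin n) := ⟨⟨0, hn⟩⟩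
  haveI : Nontrivial (EuclideanSpace ℝ (Fin n)) := inferInstance
  rw [Measure.addHaar_ball volume p hr, finrank_euclideanSpace_fin,
    ENNReal.toReal_mul, ENNReal.toReal_ofReal (by positivity)]
  rfl

lemma key_rpow (hn : 0 < n) (i : ℕ) {t : ℝ} (ht1 : (rho n i)^2 < t) (ht2 : t ≤ 2*(rho n i)^2) :
    (8*π)^(-(n:ℝ)/2) ≤ (4*π*t)^(-(n:ℝ)/2) * (rho n i)^n := by
  have hρ := rho_pos n i
  have ht0 : 0 < t := lt_trans (pow_pos hρ 2) ht1
  have hπ := Real.pi_pos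
  have h4πt : (0:ℝ) < 4*π*t := by positivity
  have e1 : ((rho n i)^2) ^ ((n:ℝ)/2) = (rho n i)^n := by
    rw [← Real.rpow_natCast (rho n i) 2, ← Real.rpow_mul hρ.le,
      show ((2:ℕ):ℝ)*((n:ℝ)/2) = (n:ℝ) by push_cast; ring, Real.rpow_natCast]
  rw [← e1]
  have h2 : t/2 ≤ (rho n i)^2 := by linarith
  have h3 : (4*π*t)^(-(n:ℝ)/2) * (t/2)^((n:ℝ)/2) ≤ (4*π*t)^(-(n:ℝ)/2) * ((rho n i)^2)^((n:ℝ)/2) :=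
    mul_le_mul_of_nonneg_left (Real.rpow_le_rpow (by positivity) h2 (by positivity)) (by positivity)
  refine le_trans (le_of_eq ?_) h3
  have e2 : -(n:ℝ)/2 = -((n:ℝ)/2) := by ring
  rw [e2, Real.rpow_neg h4πt.le, ← Real.inv_rpow h4πt.le,
    ← Real.mul_rpow (by positivity) (by positivity),
    Real.rpow_neg (by positivity : (0:ℝ) ≤ 8*π), ← Real.inv_rpow (by positivity)]
  congr 1
  field_simp
  ring

lemma heat_lb (hn : 0 < n) (i : ℕ) {t : ℝ} (ht1 : (rho n i)^2 < t) (ht2 : t ≤ 2*(rho n i)^2)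
    {x : EuclideanSpace ℝ (Fin n)} (hx : x ∈ ball (cen n i) (rho n i)) :
    kap n * hgt n i ≤ heatConv (u0 n) x t := by
  have hρ := rho_pos n i
  have ht0 : 0 < t := lt_trans (pow_pos hρ 2) ht1
  have hπ := Real.pi_pos
  have hk : (0:ℝ) ≤ (4*π*t)^(-(n:ℝ)/2) := by positivity
  have hh := hgt_pos n i
  have hw := wvol_pos hn
  set c : ℝ := (4*π*t)^(-(n:ℝ)/2) * Real.exp (-1) * (hgt n i / 2) with hc
  have hA : ∀ y ∈ ball (cen n i) (rho n i / 2),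
      c ≤ (4 * π * t) ^ (-(n:ℝ) / 2) * Real.exp (-‖x - y‖ ^ 2 / (4 * t)) * u0 n y := by
    intro y hy
    rw [mem_ball, dist_eq_norm] at hy
    rw [mem_ball, dist_eq_norm] at hx
    have hu1 : hgt n i / 2 ≤ u0 n y := by
      refine le_trans ?_ (bump_le_u0 hn i y)
      unfold bump
      have h2 : ‖y - cen n i‖ / rho n i ≤ 1/2 := (div_le_iff₀ hρ).2 (by linarith)
      have h1 : (1:ℝ)/2 ≤ max 0 (1 - ‖y - cen n i‖ / rho n i) :=
        le_trans (by linarith) (le_max_right 0 _)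
      have := mul_le_mul_of_nonneg_left h1 hh.le
      linarith
    have hxy : ‖x - y‖ ≤ ‖x - cen n i‖ + ‖y - cen n i‖ := by
      have h3 := norm_sub_le (x - cen n i) (y - cen n i)
      rw [sub_sub_sub_cancel_right] at h3
      linarith [h3, norm_sub_rev (y - cen n i) (x - cen n i), le_refl (0:ℝ)]
    have hsq : ‖x - y‖ ^ 2 ≤ 4 * t := by
      nlinarith [norm_nonneg (x - y), norm_nonneg (x - cen n i), norm_nonneg (y - cen n i),
        pow_pos hρ 2]
    have hexp : Real.exp (-1) ≤ Real.exp (-‖x - y‖ ^ 2 / (4 * t)) := by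
      rw [Real.exp_le_exp, neg_div, neg_le_neg_iff, div_le_one (by positivity)]
      exact hsq
    have := mul_le_mul (mul_le_mul_of_nonneg_left hexp hk) hu1
      (div_nonneg hh.le (by norm_num)) (mul_nonneg hk (Real.exp_pos _).le)
    exact this
  have hInt := integrand_integrable (u0 n) (u0_continuous hn) u0_nonneg (u0_integrable hn) x ht0
  have hB := setIntegral_ge_of_const_le measurableSet_ball measure_ball_lt_top.ne hA
    hInt.integrableOn
  have hC := setIntegral_le_integral (s := ball (cen n i) (rho n i / 2)) hInt (ae_of_all _ (fun y =>
    mul_nonneg (mul_nonneg hk (Real.exp_pos _).le) (u0_nonneg y)))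
  have hkey := key_rpow hn i ht1 ht2
  have main : kap n * hgt n i ≤ c * (volume (ball (cen n i) (rho n i / 2))).toReal := by
    rw [vol_ball_toReal hn _ (by positivity)]
    calc kap n * hgt n i
        = (8*π)^(-(n:ℝ)/2) * (Real.exp (-1) * ((1:ℝ)/2)^(n+1) * wvol n * hgt n i) := by
          unfold kap; ring
      _ ≤ ((4*π*t)^(-(n:ℝ)/2) * (rho n i)^n) *
            (Real.exp (-1) * ((1:ℝ)/2)^(n+1) * wvol n * hgt n i) :=
          mul_le_mul_of_nonneg_right hkey (by positivity)
      _ = c * ((rho n i / 2)^n * wvol n) := by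
          rw [hc, div_pow (rho n i) 2, pow_succ, div_pow (1:ℝ) 2]
          ring
  show kap n * hgt n i ≤ ∫ y, (4 * π * t) ^ (-(n:ℝ) / 2) * Real.exp (-‖x - y‖ ^ 2 / (4 * t)) * u0 n y
  exact le_trans main (le_trans (by rw [smul_eq_mul, mul_comm] at hB; exact hB) hC)

noncomputable def spC (n : ℕ) : ℝ := (kap n)^2 * wvol n

lemma spC_pos (hn : 0 < n) : 0 < spC n := mul_pos (pow_pos (kap_pos hn) 2) (wvol_pos hn)

lemma arith_exp (hn : 3 ≤ n) (i : ℕ) (hi : 1 ≤ i) :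
    Real.exp (((n:ℝ)-2)/n * (i:ℝ)^3) * (rho n i)^n ≤ Real.exp (-(4*(i:ℝ))) * (rho n i)^2 := by
  have hnr : (0:ℝ) < n := by positivity
  have hn3 : (3:ℝ) ≤ n := by exact_mod_cast hn
  set cv : ℝ := ((n:ℝ)-2)/n with hcv
  set a : ℝ := (i:ℝ)^3 + 13*i with ha
  have hcv3 : 1/3 ≤ cv := by
    rw [hcv, le_div_iff₀ hnr]; linarith
  have hane : 0 ≤ a := by positivity
  have hrn : (rho n i)^n = ((1:ℝ)/2)^n * Real.exp (-(a/n)) ^ n := by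
    rw [rho, mul_pow]
  have hr2 : (rho n i)^2 = ((1:ℝ)/2)^2 * Real.exp (-(a/n)) ^ 2 := by
    rw [rho, mul_pow]
  have hen : Real.exp (-(a/n)) ^ n = Real.exp (-a) := by
    rw [← Real.exp_nat_mul]
    congr 1
    field_simp
  have he2 : Real.exp (-(a/n)) ^ 2 = Real.exp (-(2*a/n)) := by
    rw [← Real.exp_nat_mul]
    congr 1
    push_cast
    ring
  rw [hrn, hr2, hen, he2]
  have hpow : ((1:ℝ)/2)^n ≤ ((1:ℝ)/2)^2 :=
    pow_le_pow_of_le_one (by norm_num) (by norm_num) (by omega)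
  have hexp : Real.exp (cv * (i:ℝ)^3 + -a) ≤ Real.exp (-(4*(i:ℝ)) + -(2*a/n)) := by
    rw [Real.exp_le_exp]
    have hkey : cv * (i:ℝ)^3 + -a + (4*(i:ℝ)) + 2*a/n = (4 - 13*cv)*(i:ℝ) := by
      rw [hcv, ha]
      field_simp
      ring
    have hile : (1:ℝ) ≤ (i:ℝ) := by exact_mod_cast hi
    nlinarith [hkey, hcv3, hile]
  calc Real.exp (cv * (i:ℝ)^3) * (((1:ℝ)/2)^n * Real.exp (-a))
      = ((1:ℝ)/2)^n * Real.exp (cv * (i:ℝ)^3 + -a) := by rw [Real.exp_add]; ring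
    _ ≤ ((1:ℝ)/2)^2 * Real.exp (-(4*(i:ℝ)) + -(2*a/n)) :=
        mul_le_mul hpow hexp (Real.exp_pos _).le (by positivity)
    _ = Real.exp (-(4*(i:ℝ))) * (((1:ℝ)/2)^2 * Real.exp (-(2*a/n))) := by
        rw [Real.exp_add]; ring

lemma arith_main (hn : 3 ≤ n) (i : ℕ) (hi : 1 ≤ i) :
    spC n * Real.exp (((n:ℝ)-2)/n * (i:ℝ)^3) ≤
      (kap n * hgt n i)^2 * ((rho n i)^n * wvol n) * (rho n i)^2 := by
  have hn0 : 0 < n := by omega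
  have hρ := rho_pos n i
  have hw := wvol_pos hn0
  have hk := kap_pos hn0
  have hE : Real.exp (((n:ℝ)-2)/n * (i:ℝ)^3) ≤ (hgt n i)^2 * (rho n i)^n * (rho n i)^2 := by
    have hgt2 : (hgt n i)^2 * (rho n i)^n * (rho n i)^2
        = Real.exp (-(4*(i:ℝ))) * (rho n i)^2 / (rho n i)^n := by
      rw [hgt, div_pow]
      have : Real.exp (-(2*(i:ℝ)))^2 = Real.exp (-(4*(i:ℝ))) := by
        rw [sq, ← Real.exp_add]; congr 1; ring
      rw [this]
      field_simp
    rw [hgt2, le_div_iff₀ (pow_pos hρ n)]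
    exact arith_exp hn i hi
  calc spC n * Real.exp (((n:ℝ)-2)/n * (i:ℝ)^3)
      = ((kap n)^2 * wvol n) * Real.exp (((n:ℝ)-2)/n * (i:ℝ)^3) := by rw [spC]
    _ ≤ ((kap n)^2 * wvol n) * ((hgt n i)^2 * (rho n i)^n * (rho n i)^2) :=
        mul_le_mul_of_nonneg_left hE (by positivity)
    _ = (kap n * hgt n i)^2 * ((rho n i)^n * wvol n) * (rho n i)^2 := by ring

lemma ball_subset (hn : 0 < n) (i : ℕ) :
    ball (cen n i) (rho n i) ⊆ ball (0 : EuclideanSpace ℝ (Fin n)) ((i:ℝ)+1) := by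
  intro z hz
  rw [mem_ball, dist_eq_norm] at hz ⊢
  have h1 : ‖z - 0‖ = ‖(z - cen n i) + cen n i‖ := by congr 1; abel
  have h2 : ‖z - 0‖ ≤ ‖z - cen n i‖ + ‖cen n i‖ := by rw [h1]; exact norm_add_le _ _
  have h3 := rho_le_half n i
  rw [norm_cen hn i] at h2
  linarith

lemma spike_lb (hn : 3 ≤ n) (i : ℕ) (hi : 1 ≤ i) :
    ENNReal.ofReal (spC n * Real.exp (((n:ℝ)-2)/n * (i:ℝ)^3)) ≤
      ∫⁻ t in Set.Ioc (0:ℝ) 1,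
        ∫⁻ x in ball (0 : EuclideanSpace ℝ (Fin n)) ((i:ℝ)+1),
          ENNReal.ofReal ((heatConv (u0 n) x t)^2) := by
  have hn0 : 0 < n := by omega
  have hρ := rho_pos n i
  have hh := hgt_pos n i
  have hk := kap_pos hn0
  have hhalf := rho_le_half n i
  set T : ℝ := (rho n i)^2 with hT
  have hT0 : 0 < T := pow_pos hρ 2
  have h2T : 2*T ≤ 1 := by rw [hT]; nlinarith
  set D : ENNReal := ENNReal.ofReal ((kap n * hgt n i)^2) * volume (ball (cen n i) (rho n i))
    with hD
  -- inner bound for t in the window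
  have hinner : ∀ t ∈ Set.Ioc T (2*T),
      D ≤ ∫⁻ x in ball (0 : EuclideanSpace ℝ (Fin n)) ((i:ℝ)+1),
            ENNReal.ofReal ((heatConv (u0 n) x t)^2) := by
    intro t htW
    obtain ⟨ht1, ht2⟩ := htW
    have hpt : ∀ x ∈ ball (cen n i) (rho n i),
        ENNReal.ofReal ((kap n * hgt n i)^2) ≤ ENNReal.ofReal ((heatConv (u0 n) x t)^2) := by
      intro x hx
      apply ENNReal.ofReal_le_ofReal
      have h4 := heat_lb hn0 i ht1 ht2 hx
      have h5 : (0:ℝ) ≤ kap n * hgt n i := by positivity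
      nlinarith
    calc D = ∫⁻ _ in ball (cen n i) (rho n i), ENNReal.ofReal ((kap n * hgt n i)^2) :=
          (setLIntegral_const _ _).symm
      _ ≤ ∫⁻ x in ball (cen n i) (rho n i), ENNReal.ofReal ((heatConv (u0 n) x t)^2) :=
          lintegral_mono_ae ((ae_restrict_iff' measurableSet_ball).2 (ae_of_all _ hpt))
      _ ≤ ∫⁻ x in ball (0 : EuclideanSpace ℝ (Fin n)) ((i:ℝ)+1),
            ENNReal.ofReal ((heatConv (u0 n) x t)^2) :=
          lintegral_mono_set (ball_subset hn0 i)
  have hW : Set.Ioc T (2*T) ⊆ Set.Ioc (0:ℝ) 1 := fun t ht =>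
    ⟨lt_trans hT0 ht.1, le_trans ht.2 h2T⟩
  calc ENNReal.ofReal (spC n * Real.exp (((n:ℝ)-2)/n * (i:ℝ)^3))
      ≤ D * ENNReal.ofReal T := by
        have hvol : volume (ball (cen n i) (rho n i)) =
            ENNReal.ofReal ((rho n i)^n) * volume (ball (0 : EuclideanSpace ℝ (Fin n)) 1) := by
          haveI : Inhabited (Fin n) := ⟨⟨0, hn0⟩⟩
          haveI : Nontrivial (EuclideanSpace ℝ (Fin n)) := inferInstance
          rw [Measure.addHaar_ball volume _ hρ.le, finrank_euclideanSpace_fin]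
        have hωeq : volume (ball (0 : EuclideanSpace ℝ (Fin n)) 1) =
            ENNReal.ofReal (wvol n) := (ENNReal.ofReal_toReal measure_ball_lt_top.ne).symm
        rw [hD, hvol, hωeq, ← ENNReal.ofReal_mul (pow_nonneg hρ.le n),
          ← ENNReal.ofReal_mul (by positivity : (0:ℝ) ≤ (kap n * hgt n i)^2),
          ← ENNReal.ofReal_mul (mul_nonneg (by positivity : (0:ℝ) ≤ (kap n * hgt n i)^2)
            (mul_nonneg (pow_nonneg hρ.le n) (wvol_pos hn0).le))]
        apply ENNReal.ofReal_le_ofReal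
        rw [hT]
        exact arith_main hn i hi
    _ = ∫⁻ _ in Set.Ioc T (2*T), D := by
        rw [setLIntegral_const, Real.volume_Ioc, show 2*T - T = T by ring, mul_comm]
    _ ≤ ∫⁻ t in Set.Ioc T (2*T),
          ∫⁻ x in ball (0 : EuclideanSpace ℝ (Fin n)) ((i:ℝ)+1),
            ENNReal.ofReal ((heatConv (u0 n) x t)^2) :=
        lintegral_mono_ae ((ae_restrict_iff' measurableSet_Ioc).2 (ae_of_all _ hinner))
    _ ≤ ∫⁻ t in Set.Ioc (0:ℝ) 1,
          ∫⁻ x in ball (0 : EuclideanSpace ℝ (Fin n)) ((i:ℝ)+1),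
            ENNReal.ofReal ((heatConv (u0 n) x t)^2) :=
        lintegral_mono_set hW


lemma no_growth_bound {C cv : ℝ} (hC : 0 < C) (hcv : 0 < cv)
    (G : ℝ → ENNReal) (hmono : ∀ a b : ℝ, a ≤ b → G a ≤ G b)
    (hG : ∀ i : ℕ, 1 ≤ i → ENNReal.ofReal (C * Real.exp (cv * (i:ℝ)^3)) ≤ G ((i:ℝ)+1))
    (L : ℝ → ℝ) (hLpos : ∀ r > (0:ℝ), 0 < L r)
    (hLmono : ∀ r s : ℝ, 0 < r → r ≤ s → L r ≤ L s)
    (hLint : ∫⁻ r in Set.Ioi (1:ℝ), ENNReal.ofReal (r / L r) = ⊤) :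
    ¬ (∀ r > (0:ℝ), G r ≤ ENNReal.ofReal (Real.exp (L r))) := by
  intro Hb
  -- Step 1: L r ≥ log C + cv (r-2)^3 for r ≥ 3
  have hLlb : ∀ r : ℝ, 3 ≤ r → Real.log C + cv * (r-2)^3 ≤ L r := by
    intro r hr
    set i : ℕ := ⌊r - 1⌋₊ with hi
    have hr1 : (1:ℝ) ≤ r - 1 := by linarith
    have hi1 : 1 ≤ i := Nat.le_floor (by exact_mod_cast hr1)
    have hile : (i:ℝ) ≤ r - 1 := Nat.floor_le (by linarith)
    have higt : r - 2 ≤ (i:ℝ) := by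
      have := Nat.lt_floor_add_one (r - 1)
      linarith
    have hchain : ENNReal.ofReal (C * Real.exp (cv * (i:ℝ)^3)) ≤
        ENNReal.ofReal (Real.exp (L r)) := by
      calc ENNReal.ofReal (C * Real.exp (cv * (i:ℝ)^3)) ≤ G ((i:ℝ)+1) := hG i hi1
        _ ≤ G r := hmono _ _ (by linarith)
        _ ≤ ENNReal.ofReal (Real.exp (L r)) := Hb r (by linarith)
    have hre : C * Real.exp (cv * (i:ℝ)^3) ≤ Real.exp (L r) :=
      (ENNReal.ofReal_le_ofReal_iff (Real.exp_pos _).le).1 hchain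
    have hlog : Real.log C + cv * (i:ℝ)^3 ≤ L r := by
      have h1 : Real.log (C * Real.exp (cv * (i:ℝ)^3)) ≤ Real.log (Real.exp (L r)) :=
        Real.log_le_log (by positivity) hre
      rw [Real.log_mul hC.ne' (Real.exp_pos _).ne', Real.log_exp, Real.log_exp] at h1
      exact h1
    have hcube : cv * (r-2)^3 ≤ cv * (i:ℝ)^3 := by
      apply mul_le_mul_of_nonneg_left _ hcv.le
      have h2 : (0:ℝ) ≤ r - 2 := by linarith
      exact pow_le_pow_left₀ h2 higt 3
    linarith
  -- Step 2: choose R beyond which L r ≥ (cv/16) r^3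
  set R : ℝ := max 4 (16*(1+|Real.log C|)/cv) with hR
  have hR4 : (4:ℝ) ≤ R := le_max_left _ _
  have hR0 : (0:ℝ) < R := by linarith
  have hLR : ∀ r : ℝ, R < r → cv/16 * r^3 ≤ L r := by
    intro r hrR
    have hr4 : (4:ℝ) < r := lt_of_le_of_lt hR4 hrR
    have h1 : r^3 ≥ 16*(1+|Real.log C|)/cv := by
      have h2 : 16*(1+|Real.log C|)/cv ≤ R := le_max_right _ _
      have h3 : r ≤ r^3 := by nlinarith [sq_nonneg (r-1), sq_nonneg (r+1), hr4]
      linarith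
    have h4 : cv * r^3 ≥ 16*(1+|Real.log C|) := by
      rw [ge_iff_le, ← div_le_iff₀' hcv]
      linarith [h1]
    have h5 : (r/2)^3 ≤ (r-2)^3 := by
      apply pow_le_pow_left₀ (by linarith)
      linarith
    have h6 := hLlb r (by linarith)
    have h7 : -|Real.log C| ≤ Real.log C := neg_abs_le _
    nlinarith [h5, h6, h7, h4]
  -- Step 3: the tail integral is finite
  have htail : ∫⁻ r in Set.Ioi R, ENNReal.ofReal (r / L r) < ⊤ := by
    have hInt : IntegrableOn (fun r : ℝ => 16/cv * r ^ (-(2:ℝ))) (Set.Ioi R) := by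
      exact (integrableOn_Ioi_rpow_of_lt (by norm_num) hR0).const_mul _
    have hbd : ∀ r ∈ Set.Ioi R, ENNReal.ofReal (r / L r) ≤
        ENNReal.ofReal (16/cv * r ^ (-(2:ℝ))) := by
      intro r hr
      rw [Set.mem_Ioi] at hr
      have hr0 : (0:ℝ) < r := by linarith
      have hL := hLR r hr
      have hLp : (0:ℝ) < cv/16 * r^3 := by positivity
      apply ENNReal.ofReal_le_ofReal
      have h8 : r / L r ≤ r / (cv/16 * r^3) :=
        div_le_div_of_nonneg_left hr0.le hLp hL
      have h9 : r / (cv/16 * r^3) = 16/cv * r ^ (-(2:ℝ)) := by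
        rw [Real.rpow_neg hr0.le, show ((2:ℝ)) = ((2:ℕ):ℝ) by norm_num,
          Real.rpow_natCast]
        field_simp
      linarith [h8, h9.le, h9.ge]
    calc ∫⁻ r in Set.Ioi R, ENNReal.ofReal (r / L r)
        ≤ ∫⁻ r in Set.Ioi R, ENNReal.ofReal (16/cv * r ^ (-(2:ℝ))) :=
          lintegral_mono_ae ((ae_restrict_iff' measurableSet_Ioi).2 (ae_of_all _ hbd))
      _ ≤ ∫⁻ r in Set.Ioi R, ‖16/cv * r ^ (-(2:ℝ))‖ₑ :=
          lintegral_ofReal_le_lintegral_enorm _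
      _ < ⊤ := hInt.hasFiniteIntegral
  -- Step 4: the near integral is finite
  have hnear : ∫⁻ r in Set.Ioc (1:ℝ) R, ENNReal.ofReal (r / L r) < ⊤ := by
    have hL1 : 0 < L 1 := hLpos 1 one_pos
    have hbd : ∀ r ∈ Set.Ioc (1:ℝ) R, ENNReal.ofReal (r / L r) ≤
        ENNReal.ofReal (R / L 1) := by
      intro r hr
      obtain ⟨hr1, hrR⟩ := hr
      apply ENNReal.ofReal_le_ofReal
      exact div_le_div₀ hR0.le hrR hL1 (hLmono 1 r one_pos hr1.le)
    calc ∫⁻ r in Set.Ioc (1:ℝ) R, ENNReal.ofReal (r / L r)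
        ≤ ∫⁻ _ in Set.Ioc (1:ℝ) R, ENNReal.ofReal (R / L 1) :=
          lintegral_mono_ae ((ae_restrict_iff' measurableSet_Ioc).2 (ae_of_all _ hbd))
      _ = ENNReal.ofReal (R / L 1) * volume (Set.Ioc (1:ℝ) R) := setLIntegral_const _ _
      _ < ⊤ := ENNReal.mul_lt_top ENNReal.ofReal_lt_top (by rw [Real.volume_Ioc]; exact ENNReal.ofReal_lt_top)
  -- combine
  have hsplit : ∫⁻ r in Set.Ioi (1:ℝ), ENNReal.ofReal (r / L r) =
      (∫⁻ r in Set.Ioc (1:ℝ) R, ENNReal.ofReal (r / L r)) +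
      (∫⁻ r in Set.Ioi R, ENNReal.ofReal (r / L r)) := by
    rw [← lintegral_union measurableSet_Ioi Set.Ioc_disjoint_Ioi_same,
      Set.Ioc_union_Ioi_eq_Ioi (by linarith : (1:ℝ) ≤ R)]
  rw [hsplit] at hLint
  exact absurd hLint (ENNReal.add_lt_top.2 ⟨hnear, htail⟩).ne


end SpikedEx

/-- **The spiked example (Section 3).** For `n ≥ 3` there is a continuous nonnegative
integrable initial datum `u₀` on `ℝⁿ` and a constant `C(n) > 0` such that the heat-kernel
convolution `u` satisfies: (i) `0 ≤ u(x,t) ≤ ‖u₀‖_{L¹} (4πt)^(-n/2)` on `ℝⁿ × (0,1]`,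
so `u` lies in the uniqueness class of Theorem 1; and (ii) for every integer `i ≥ 1`,
`∫₀¹ ∫_{B(0,i+1)} u² ≥ C(n) e^(((n-2)/n) i³)`, so `u` violates the growth condition
`∫₀¹ ∫_{B(0,r)} u² ≤ e^(L(r))` for every positive nondecreasing `L` with
`∫₁^∞ r / L(r) dr = ∞`. -/
theorem spiked_example_exists (n : ℕ) (hn : 3 ≤ n) :
    ∃ (u₀ : EuclideanSpace ℝ (Fin n) → ℝ) (Cn : ℝ),
      Continuous u₀ ∧ (∀ y, 0 ≤ u₀ y) ∧ Integrable u₀ ∧ 0 < Cn ∧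
      (∀ (x : EuclideanSpace ℝ (Fin n)), ∀ t ∈ Set.Ioc (0:ℝ) 1,
        0 ≤ heatConv u₀ x t ∧
        heatConv u₀ x t ≤ (∫ y, |u₀ y|) * (4 * π * t) ^ (-(n:ℝ) / 2)) ∧
      (∀ i : ℕ, 1 ≤ i →
        ENNReal.ofReal (Cn * Real.exp (((n:ℝ) - 2) / n * (i:ℝ) ^ 3)) ≤
          ∫⁻ t in Set.Ioc (0:ℝ) 1,
            ∫⁻ x in ball (0 : EuclideanSpace ℝ (Fin n)) ((i:ℝ) + 1),
              ENNReal.ofReal ((heatConv u₀ x t) ^ 2)) ∧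
      (∀ L : ℝ → ℝ, (∀ r > (0:ℝ), 0 < L r) → (∀ r s : ℝ, 0 < r → r ≤ s → L r ≤ L s) →
        (∫⁻ r in Set.Ioi (1:ℝ), ENNReal.ofReal (r / L r) = ⊤) →
        ¬ (∀ r > (0:ℝ),
          ∫⁻ t in Set.Ioc (0:ℝ) 1, ∫⁻ x in ball (0 : EuclideanSpace ℝ (Fin n)) r,
            ENNReal.ofReal ((heatConv u₀ x t) ^ 2) ≤ ENNReal.ofReal (Real.exp (L r)))) := by
  have hn0 : 0 < n := by omega
  refine ⟨SpikedEx.u0 n, SpikedEx.spC n, SpikedEx.u0_continuous hn0, SpikedEx.u0_nonneg,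
    SpikedEx.u0_integrable hn0, SpikedEx.spC_pos hn0, ?_, ?_, ?_⟩
  · intro x t ht
    exact ⟨SpikedEx.heatConv_nonneg (SpikedEx.u0 n) SpikedEx.u0_nonneg x ht.1,
      SpikedEx.heatConv_le (SpikedEx.u0 n) (SpikedEx.u0_continuous hn0) SpikedEx.u0_nonneg
        (SpikedEx.u0_integrable hn0) x ht.1⟩
  · intro i hi
    exact SpikedEx.spike_lb hn i hi
  · intro L hL1 hL2 hL3
    have hcv : (0:ℝ) < ((n:ℝ) - 2)/n := by
      apply div_pos _ (by positivity)
      have : (3:ℝ) ≤ n := by exact_mod_cast hn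
      linarith
    exact SpikedEx.no_growth_bound (SpikedEx.spC_pos hn0) hcv
      (fun r => ∫⁻ t in Set.Ioc (0:ℝ) 1,
        ∫⁻ x in ball (0 : EuclideanSpace ℝ (Fin n)) r,
          ENNReal.ofReal ((heatConv (SpikedEx.u0 n) x t) ^ 2))
      (fun a b hab => lintegral_mono fun t => lintegral_mono_set (ball_subset_ball hab))
      (fun i hi => SpikedEx.spike_lb hn i hi) L hL1 hL2 hL3
end
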